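/- arXiv:2212.03381 — 8 statements merged into one kernel-verified Lean document; each statement's English description precedes it below -/
import Mathlib

section
/- Let P ∈ ℤ[X] be an irreducible monic quartic with Galois group C4 or D4, roots ordered so that r1 r2 + r3 r4 ∈ ℚ. Then the elements 1, r1 + r3, and r1^2 + r3^2 + r1 r3 of the splitting field are linearly independent over ℚ. -/
open Polynomial

lemma quartic_key_alg {K : Type*} [Field K] [Algebra ℚ K] (ρ : K ≃ₐ[ℚ] K)
    (r1 r2 r3 r4 : K) (h12 : r1 ≠ r2) (h34 : r3 ≠ r4)
    (e1 : ρ r1 = r3) (e3 : ρ r3 = r2) (e2 : ρ r2 = r4) (e4 : ρ r4 = r1)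
    (a b c : ℚ)
    (hsum : algebraMap ℚ K a + algebraMap ℚ K b * (r1 + r3)
      + algebraMap ℚ K c * (r1 ^ 2 + r3 ^ 2 + r1 * r3) = 0) :
    a = 0 ∧ b = 0 ∧ c = 0 := by
  have inj : Function.Injective (algebraMap ℚ K) := (algebraMap ℚ K).injective
  have E1 := congrArg ρ hsum
  simp only [map_add, map_mul, map_pow, map_zero, AlgEquiv.commutes, e1, e2, e3, e4] at E1
  have E2 := congrArg ρ E1
  simp only [map_add, map_mul, map_pow, map_zero, AlgEquiv.commutes, e1, e2, e3, e4] at E2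
  have E3 := congrArg ρ E2
  simp only [map_add, map_mul, map_pow, map_zero, AlgEquiv.commutes, e1, e2, e3, e4] at E3
  have hc : algebraMap ℚ K c * ((r1 - r2) * (r3 - r4)) = 0 := by
    linear_combination hsum + E2 - E1 - E3
  have hc0 : c = 0 := by
    rcases mul_eq_zero.mp hc with h | h
    · exact inj (by simpa using h)
    · rcases mul_eq_zero.mp h with h' | h'
      · exact absurd (sub_eq_zero.mp h') h12
      · exact absurd (sub_eq_zero.mp h') h34
  subst hc0
  simp only [map_zero, zero_mul, add_zero] at hsum E1
  have hb : algebraMap ℚ K b * (r1 - r2) = 0 := by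
    linear_combination hsum - E1
  have hb0 : b = 0 := by
    rcases mul_eq_zero.mp hb with h | h
    · exact inj (by simpa using h)
    · exact absurd (sub_eq_zero.mp h) h12
  subst hb0
  simp only [map_zero, zero_mul, add_zero] at hsum
  exact ⟨inj (by simpa using hsum), rfl, rfl⟩

lemma quartic_aux (Q : ℚ[X]) (hQmonic : Q.Monic) (hsep : Q.Separable)
    (hGal : Nonempty (Q.Gal ≃* Multiplicative (ZMod 4)) ∨
            Nonempty (Q.Gal ≃* DihedralGroup 4))
    (r1 r2 r3 r4 : Q.SplittingField)
    (hroots : (Q.map (algebraMap ℚ Q.SplittingField)).roots = {r1, r2, r3, r4})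
    (hrat : ∃ q : ℚ, r1 * r2 + r3 * r4 = algebraMap ℚ Q.SplittingField q) :
    LinearIndependent ℚ
      ![(1 : Q.SplittingField), r1 + r3, r1 ^ 2 + r3 ^ 2 + r1 * r3] := by
  -- distinctness of roots
  have hnd : ({r1, r2, r3, r4} : Multiset Q.SplittingField).Nodup := by
    rw [← hroots]; exact nodup_roots hsep.map
  simp only [Multiset.insert_eq_cons, Multiset.nodup_cons, Multiset.mem_cons,
    Multiset.mem_singleton, Multiset.nodup_singleton, and_true, not_or] at hnd
  obtain ⟨⟨h12, h13, h14⟩, ⟨h23, h24⟩, h34⟩ := hnd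
  -- each rᵢ is a root, and automorphisms permute the roots
  have hQmne : Q.map (algebraMap ℚ Q.SplittingField) ≠ 0 := (hQmonic.map _).ne_zero
  have hmemroots : ∀ x : Q.SplittingField, x ∈ (Q.map (algebraMap ℚ Q.SplittingField)).roots ↔
      (x = r1 ∨ x = r2 ∨ x = r3 ∨ x = r4) := by
    intro x
    rw [hroots]
    simp [Multiset.insert_eq_cons]
  have hrootmem : ∀ (i : Q.SplittingField), (i = r1 ∨ i = r2 ∨ i = r3 ∨ i = r4) →
      ∀ ψ : Q.Gal, ψ i = r1 ∨ ψ i = r2 ∨ ψ i = r3 ∨ ψ i = r4 := by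
    intro x hx ψ
    rw [← hmemroots]
    have hx' : aeval x Q = 0 := by
      have : x ∈ (Q.map (algebraMap ℚ Q.SplittingField)).roots := (hmemroots x).mpr hx
      rw [mem_roots hQmne] at this
      rwa [IsRoot, eval_map, ← aeval_def] at this
    have heq : aeval (ψ x) Q = ψ (aeval x Q) :=
      aeval_algHom_apply (ψ : Q.SplittingField ≃ₐ[ℚ] Q.SplittingField).toAlgHom x Q
    rw [mem_roots hQmne, IsRoot, eval_map, ← aeval_def]
    rw [heq, hx', map_zero]
  -- an automorphism fixing all roots is trivial
  have hfixall : ∀ ψ : Q.Gal, ψ r1 = r1 → ψ r2 = r2 → ψ r3 = r3 → ψ r4 = r4 → ψ = 1 := by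
    intro ψ e1 e2 e3 e4
    apply Polynomial.Gal.ext
    intro x hx
    rw [mem_rootSet'] at hx
    have hx' : x ∈ (Q.map (algebraMap ℚ Q.SplittingField)).roots := by
      rw [mem_roots hQmne, IsRoot, eval_map, ← aeval_def]; exact hx.2
    rcases (hmemroots x).mp hx' with rfl | rfl | rfl | rfl <;> simpa
  -- obtain an automorphism whose square is not the identity
  obtain ⟨ρ, h2ne⟩ : ∃ ρ : Q.Gal, ρ * ρ ≠ 1 := by
    rcases hGal with ⟨⟨e⟩⟩ | ⟨⟨e⟩⟩
    · refine ⟨e.symm (Multiplicative.ofAdd 1), fun h => ?_⟩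
      have := congrArg e h
      simp only [map_mul, map_one, MulEquiv.apply_symm_apply] at this
      exact absurd this (by decide)
    · refine ⟨e.symm (DihedralGroup.r 1), fun h => ?_⟩
      have := congrArg e h
      simp only [map_mul, map_one, MulEquiv.apply_symm_apply] at this
      exact absurd this (by decide)
  have hinj : ∀ {x y : Q.SplittingField}, ρ x = ρ y → x = y := fun h => ρ.injective h
  -- ρ fixes r1 r2 + r3 r4
  have hw : ρ r1 * ρ r2 + ρ r3 * ρ r4 = r1 * r2 + r3 * r4 := by
    obtain ⟨q, hq⟩ := hrat
    have : ρ (r1 * r2 + r3 * r4) = r1 * r2 + r3 * r4 := by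
      rw [hq]; exact ρ.commutes q
    simpa [map_add, map_mul] using this
  have hρ1 := hrootmem r1 (Or.inl rfl) ρ
  have hρ2 := hrootmem r2 (Or.inr (Or.inl rfl)) ρ
  have hρ3 := hrootmem r3 (Or.inr (Or.inr (Or.inl rfl))) ρ
  have hρ4 := hrootmem r4 (Or.inr (Or.inr (Or.inr rfl))) ρ
  have huw : ¬(r1 * r3 + r2 * r4 = r1 * r2 + r3 * r4) := by
    intro h
    have : (r1 - r4) * (r3 - r2) = 0 := by linear_combination h
    rcases mul_eq_zero.mp this with h' | h'
    · exact h14 (sub_eq_zero.mp h')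
    · exact h23 (sub_eq_zero.mp h').symm
  have hvw : ¬(r1 * r4 + r2 * r3 = r1 * r2 + r3 * r4) := by
    intro h
    have : (r1 - r3) * (r4 - r2) = 0 := by linear_combination h
    rcases mul_eq_zero.mp this with h' | h'
    · exact h13 (sub_eq_zero.mp h')
    · exact h24 (sub_eq_zero.mp h').symm
  have hgood : (ρ r1 = r3 ∧ ρ r3 = r2 ∧ ρ r2 = r4 ∧ ρ r4 = r1) ∨
      (ρ r3 = r1 ∧ ρ r1 = r4 ∧ ρ r4 = r2 ∧ ρ r2 = r3) := by
    rcases hρ1 with h1 | h1 | h1 | h1 <;> rcases hρ2 with h2 | h2 | h2 | h2 <;>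
      rcases hρ3 with h3 | h3 | h3 | h3 <;> rcases hρ4 with h4 | h4 | h4 | h4 <;>
      rw [h1, h2, h3, h4] at hw <;>
      first
      | exact absurd (hinj (h1.trans h2.symm)) h12
      | exact absurd (hinj (h1.trans h3.symm)) h13
      | exact absurd (hinj (h1.trans h4.symm)) h14
      | exact absurd (hinj (h2.trans h3.symm)) h23
      | exact absurd (hinj (h2.trans h4.symm)) h24
      | exact absurd (hinj (h3.trans h4.symm)) h34
      | exact Or.inl ⟨h1, h3, h2, h4⟩
      | exact Or.inr ⟨h3, h1, h4, h2⟩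
      | exact absurd hw huw
      | exact absurd hw hvw
      | (exact absurd hw (by intro h; exact huw (by linear_combination h)))
      | (exact absurd hw (by intro h; exact hvw (by linear_combination h)))
      | exact absurd (hfixall (ρ * ρ)
          (by change ρ (ρ r1) = r1; rw [h1]; assumption)
          (by change ρ (ρ r2) = r2; rw [h2]; assumption)
          (by change ρ (ρ r3) = r3; rw [h3]; assumption)
          (by change ρ (ρ r4) = r4; rw [h4]; assumption)) h2ne
  -- now the linear independence
  rw [Fintype.linearIndependent_iff]
  intro g hg
  have hsum : algebraMap ℚ Q.SplittingField (g 0) + algebraMap ℚ Q.SplittingField (g 1) * (r1 + r3)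
      + algebraMap ℚ Q.SplittingField (g 2) * (r1 ^ 2 + r3 ^ 2 + r1 * r3) = 0 := by
    have := hg
    simp only [Fin.sum_univ_three, Matrix.cons_val_zero, Matrix.cons_val_one, Matrix.head_cons,
      Matrix.cons_val_two, Matrix.tail_cons, Algebra.smul_def, mul_one] at this
    linear_combination this
  have habc : g 0 = 0 ∧ g 1 = 0 ∧ g 2 = 0 := by
    rcases hgood with ⟨e1, e3, e2, e4⟩ | ⟨e1, e3, e2, e4⟩
    · exact quartic_key_alg ρ r1 r2 r3 r4 h12 h34 e1 e3 e2 e4 _ _ _ hsum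
    · refine quartic_key_alg ρ r3 r4 r1 r2 h34 h12 e1 e3 e2 e4 (g 0) (g 1) (g 2) ?_
      rw [add_comm r3 r1, add_comm (r3 ^ 2) (r1 ^ 2), mul_comm r3 r1]; exact hsum
  intro i
  fin_cases i
  · exact habc.1
  · exact habc.2.1
  · exact habc.2.2

/-- Let `P ∈ ℤ[X]` be an irreducible monic quartic with Galois group
`C4` or `D4`, with roots ordered so that `r1 r2 + r3 r4 ∈ ℚ`. Then `1`, `r1 + r3`,
and `r1^2 + r3^2 + r1 r3` are linearly independent over `ℚ` in the splitting field. -/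
theorem quartic_C4_D4_linear_independence (P : ℤ[X]) (hmonic : P.Monic)
    (hdeg : P.natDegree = 4) (hirr : Irreducible P)
    (hGal : Nonempty ((P.map (Int.castRingHom ℚ)).Gal ≃* Multiplicative (ZMod 4)) ∨
            Nonempty ((P.map (Int.castRingHom ℚ)).Gal ≃* DihedralGroup 4))
    (r1 r2 r3 r4 : (P.map (Int.castRingHom ℚ)).SplittingField)
    (hroots : ((P.map (Int.castRingHom ℚ)).map
        (algebraMap ℚ (P.map (Int.castRingHom ℚ)).SplittingField)).roots
        = {r1, r2, r3, r4})
    (hrat : ∃ q : ℚ, r1 * r2 + r3 * r4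
        = algebraMap ℚ (P.map (Int.castRingHom ℚ)).SplittingField q) :
    LinearIndependent ℚ
      ![(1 : (P.map (Int.castRingHom ℚ)).SplittingField), r1 + r3,
        r1 ^ 2 + r3 ^ 2 + r1 * r3] := by
  have hirrQ : Irreducible (P.map (Int.castRingHom ℚ)) :=
    (IsPrimitive.Int.irreducible_iff_irreducible_map_cast hmonic.isPrimitive).mp hirr
  exact quartic_aux _ (hmonic.map _) hirrQ.separable hGal r1 r2 r3 r4 hroots hrat
end

section
/- Let P ∈ ℤ[X] be an irreducible monic quartic with Galois group C4, generated by the 4-cycle σ sending r1 → r3 → r2 → r4 → r1, with roots ordered so that r1 r2 + r3 r4 ∈ ℚ. Then ℚ(r1 + r3) equals the splitting field of P, i.e. [ℚ(r1 + r3) : ℚ] = 4. -/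
open Polynomial

/-- Let `P ∈ ℤ[X]` be an irreducible monic quartic whose Galois group
is cyclic of order 4, generated by the 4-cycle `σ` with `σ r1 = r3`, `σ r3 = r2`,
`σ r2 = r4`, `σ r4 = r1`, with roots ordered so that `r1 r2 + r3 r4 ∈ ℚ`. Then
`ℚ(r1 + r3)` equals the splitting field of `P`, i.e. `[ℚ(r1 + r3) : ℚ] = 4`. -/
theorem quartic_C4_adjoin_sum_roots_eq_top (P : ℤ[X]) (hmonic : P.Monic)
    (hdeg : P.natDegree = 4) (hirr : Irreducible P)
    (r1 r2 r3 r4 : (P.map (Int.castRingHom ℚ)).SplittingField)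
    (hroots : ((P.map (Int.castRingHom ℚ)).map
        (algebraMap ℚ (P.map (Int.castRingHom ℚ)).SplittingField)).roots
        = {r1, r2, r3, r4})
    (σ : (P.map (Int.castRingHom ℚ)).Gal)
    (hgen : ∀ τ : (P.map (Int.castRingHom ℚ)).Gal, τ ∈ Subgroup.zpowers σ)
    (h13 : σ r1 = r3) (h32 : σ r3 = r2) (h24 : σ r2 = r4) (h41 : σ r4 = r1)
    (hrat : ∃ q : ℚ, r1 * r2 + r3 * r4
        = algebraMap ℚ (P.map (Int.castRingHom ℚ)).SplittingField q) :
    IntermediateField.adjoin ℚ {r1 + r3} = ⊤ ∧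
    Module.finrank ℚ (IntermediateField.adjoin ℚ {r1 + r3}) = 4 := by
  have hirr' : Irreducible (P.map (Int.castRingHom ℚ)) :=
    (IsPrimitive.Int.irreducible_iff_irreducible_map_cast hmonic.isPrimitive).mp hirr
  have hsep : (P.map (Int.castRingHom ℚ)).Separable := hirr'.separable
  have hnodup := Polynomial.nodup_roots
    (hsep.map (f := algebraMap ℚ (P.map (Int.castRingHom ℚ)).SplittingField))
  rw [hroots] at hnodup
  simp only [Multiset.insert_eq_cons, Multiset.nodup_cons, Multiset.mem_cons,
    Multiset.mem_singleton, not_or] at hnodup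
  obtain ⟨⟨h12, h13', h14⟩, ⟨h23, h24'⟩, h34, -⟩ := hnodup
  have hmapne : (P.map (Int.castRingHom ℚ)).map
      (algebraMap ℚ (P.map (Int.castRingHom ℚ)).SplittingField) ≠ 0 := by
    intro h
    have : r1 ∈ ({r1, r2, r3, r4} : Multiset _) := by simp
    rw [← hroots, h, Polynomial.roots_zero] at this
    exact Multiset.notMem_zero r1 this
  have hmem : ∀ x, x ∈ ({r1, r2, r3, r4} : Multiset _) →
      x ∈ (P.map (Int.castRingHom ℚ)).rootSet
        (P.map (Int.castRingHom ℚ)).SplittingField := by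
    intro x hx
    rw [mem_rootSet']
    refine ⟨hmapne, ?_⟩
    have : IsRoot _ x := isRoot_of_mem_roots (by rw [hroots]; exact hx)
    rwa [IsRoot, eval_map, ← aeval_def] at this
  have hmem' : ∀ x, x ∈ (P.map (Int.castRingHom ℚ)).rootSet
      (P.map (Int.castRingHom ℚ)).SplittingField →
      x ∈ ({r1, r2, r3, r4} : Multiset _) := by
    intro x hx
    rw [mem_rootSet'] at hx
    rw [← hroots, mem_roots', IsRoot, eval_map, ← aeval_def]
    exact ⟨hmapne, hx.2⟩
  have hσ2 : ∀ x, (σ ^ 2) x = σ (σ x) := by intro x; rw [pow_two]; rfl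
  have hσ3 : ∀ x, (σ ^ 3) x = σ (σ (σ x)) := by
    intro x
    rw [pow_succ]
    show (σ ^ 2) (σ x) = _
    rw [hσ2]
  have hσ4app : ∀ x, (σ ^ 4) x = σ (σ (σ (σ x))) := by
    intro x
    rw [pow_succ]
    show (σ ^ 3) (σ x) = _
    rw [hσ3]
  have hσ4 : σ ^ 4 = 1 := by
    apply Polynomial.Gal.ext
    intro x hx
    rw [hσ4app]
    show _ = x
    have := hmem' x hx
    simp only [Multiset.insert_eq_cons, Multiset.mem_cons, Multiset.mem_singleton] at this
    rcases this with rfl | rfl | rfl | rfl <;> simp [h13, h32, h24, h41]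
  have hord : orderOf σ = 4 := by
    rw [orderOf_eq_iff (by norm_num)]
    refine ⟨hσ4, ?_⟩
    intro m hm hm0 hσm
    have happ := congrArg (fun τ : (P.map (Int.castRingHom ℚ)).Gal => τ r1) hσm
    change (σ ^ m) r1 = r1 at happ
    interval_cases m
    · rw [pow_one, h13] at happ
      exact h13' happ.symm
    · rw [hσ2, h13, h32] at happ
      exact h12 happ.symm
    · rw [hσ3, h13, h32, h24] at happ
      exact h14 happ.symm
  have hfix : ∀ τ : (P.map (Int.castRingHom ℚ)).Gal,
      τ (r1 + r3) = r1 + r3 → τ = 1 := by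
    intro τ hτ
    obtain ⟨n, hn⟩ := hgen τ
    have hn' : σ ^ n = τ := hn
    rw [← hn', ← zpow_mod_orderOf, hord] at hτ
    rw [← hn', ← zpow_mod_orderOf, hord]
    simp only [Nat.cast_ofNat] at hτ ⊢
    obtain ⟨m, hm4, hmn⟩ : ∃ m : ℕ, m < 4 ∧ (m : ℤ) = n % 4 :=
      ⟨(n % 4).toNat, by omega, by
        have := Int.emod_nonneg n (show (4:ℤ) ≠ 0 by norm_num); omega⟩
    rw [← hmn, zpow_natCast] at hτ ⊢
    interval_cases m
    · simp
    · exfalso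
      rw [pow_one, map_add, h13, h32] at hτ
      exact h12 (by linear_combination -hτ)
    · exfalso
      rw [hσ2 (r1 + r3)] at hτ
      simp only [map_add, h13, h32, h24] at hτ
      have hτ2 := congrArg σ hτ
      simp only [map_add, h13, h32, h24, h41] at hτ2
      exact h34 (by linear_combination (-hτ - hτ2) / 2)
    · exfalso
      rw [hσ3 (r1 + r3)] at hτ
      simp only [map_add, h13, h32, h24, h41] at hτ
      exact h34 (by linear_combination -hτ)
  haveI : IsGalois ℚ (P.map (Int.castRingHom ℚ)).SplittingField :=
    @IsGalois.of_separable_splitting_field _ _ _ _ _ _ (Polynomial.IsSplittingField.splittingField _) hsep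
  have hfixsub : (IntermediateField.adjoin ℚ {r1 + r3}).fixingSubgroup = ⊥ := by
    rw [eq_bot_iff]
    intro τ hτ
    rw [Subgroup.mem_bot]
    exact hfix τ (hτ ⟨r1 + r3, IntermediateField.mem_adjoin_simple_self ℚ (r1 + r3)⟩)
  have htop : IntermediateField.adjoin ℚ {r1 + r3} = ⊤ := by
    have hff := IsGalois.fixedField_fixingSubgroup (IntermediateField.adjoin ℚ {r1 + r3})
    rw [hfixsub] at hff
    rw [← hff]
    apply le_antisymm le_top
    intro x _
    rintro ⟨g, hg⟩
    rw [Subgroup.mem_bot] at hg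
    subst hg
    rfl
  refine ⟨htop, ?_⟩
  rw [htop, IntermediateField.finrank_top', ← IsGalois.card_aut_eq_finrank,
    ← hord, orderOf_eq_card_of_forall_mem_zpowers hgen, Nat.card_eq_fintype_card]
  rw [← Nat.card_eq_fintype_card]; rfl
end

section
/- Let P(X) = X^4 + c3 X^3 + c2 X^2 + c1 X + c0 ∈ ℤ[X] be monic quartic with root r1, and for α = a0 + a1 r1 + a2 r1^2 + a3 r1^3 let M_α be the matrix of multiplication by α in the basis {1, r1, r1^2, r1^3} of ℚ(r1), with cofactors B_{ij} (so that the (j,i) entry of N(α) M_α^{-1} is B_{ij}). Then the polynomial identity B_{24} B_{13} - B_{14} B_{23} = q3 · N(α) holds in ℤ[a0, a1, a2, a3], where q3 = a2^2 - a1 a3 - c3 a2 a3 + c2 a3^2 and N(α) = det M_α. -/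
open Polynomial Matrix


section aux
variable {α : Type*} [CommRing α]

private lemma aux_det4 (a b c d e f g h i j k l m n o p : α) :
    Matrix.det !![a,b,c,d; e,f,g,h; i,j,k,l; m,n,o,p]
      = a*(f*(k*p-l*o) - g*(j*p-l*n) + h*(j*o-k*n))
        - b*(e*(k*p-l*o) - g*(i*p-l*m) + h*(i*o-k*m))
        + c*(e*(j*p-l*n) - f*(i*p-l*m) + h*(i*n-j*m))
        - d*(e*(j*o-k*n) - f*(i*o-k*m) + g*(i*n-j*m)) := by
  simp [Matrix.det_succ_row_zero, Fin.sum_univ_succ, Fin.succAbove, Fin.castSucc,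
    Fin.castAdd, Fin.castLE, Fin.succ]
  ring

private lemma aux_adj31 (a b c d e f g h i j k l m n o p : α) :
    Matrix.adjugate !![a,b,c,d; e,f,g,h; i,j,k,l; m,n,o,p] 3 1
      = Matrix.det !![a,b,c; i,j,k; m,n,o] := by
  rw [Matrix.adjugate_fin_succ_eq_det_submatrix]
  have hs : (!![a,b,c,d; e,f,g,h; i,j,k,l; m,n,o,p]).submatrix
      (Fin.succAbove (1:Fin 4)) (Fin.succAbove (3:Fin 4)) = !![a,b,c; i,j,k; m,n,o] := by
    ext x y; fin_cases x <;> fin_cases y <;> rfl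
  rw [hs]
  norm_num [show (((3:Fin 4)):ℕ) = 3 from rfl, show (((2:Fin 4)):ℕ) = 2 from rfl]

private lemma aux_adj20 (a b c d e f g h i j k l m n o p : α) :
    Matrix.adjugate !![a,b,c,d; e,f,g,h; i,j,k,l; m,n,o,p] 2 0
      = Matrix.det !![e,f,h; i,j,l; m,n,p] := by
  rw [Matrix.adjugate_fin_succ_eq_det_submatrix]
  have hs : (!![a,b,c,d; e,f,g,h; i,j,k,l; m,n,o,p]).submatrix
      (Fin.succAbove (0:Fin 4)) (Fin.succAbove (2:Fin 4)) = !![e,f,h; i,j,l; m,n,p] := by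
    ext x y; fin_cases x <;> fin_cases y <;> rfl
  rw [hs]
  norm_num [show (((3:Fin 4)):ℕ) = 3 from rfl, show (((2:Fin 4)):ℕ) = 2 from rfl]

private lemma aux_adj30 (a b c d e f g h i j k l m n o p : α) :
    Matrix.adjugate !![a,b,c,d; e,f,g,h; i,j,k,l; m,n,o,p] 3 0
      = - Matrix.det !![e,f,g; i,j,k; m,n,o] := by
  rw [Matrix.adjugate_fin_succ_eq_det_submatrix]
  have hs : (!![a,b,c,d; e,f,g,h; i,j,k,l; m,n,o,p]).submatrix
      (Fin.succAbove (0:Fin 4)) (Fin.succAbove (3:Fin 4)) = !![e,f,g; i,j,k; m,n,o] := by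
    ext x y; fin_cases x <;> fin_cases y <;> rfl
  rw [hs]
  norm_num [show (((3:Fin 4)):ℕ) = 3 from rfl, show (((2:Fin 4)):ℕ) = 2 from rfl]

private lemma aux_adj21 (a b c d e f g h i j k l m n o p : α) :
    Matrix.adjugate !![a,b,c,d; e,f,g,h; i,j,k,l; m,n,o,p] 2 1
      = - Matrix.det !![a,b,d; i,j,l; m,n,p] := by
  rw [Matrix.adjugate_fin_succ_eq_det_submatrix]
  have hs : (!![a,b,c,d; e,f,g,h; i,j,k,l; m,n,o,p]).submatrix
      (Fin.succAbove (1:Fin 4)) (Fin.succAbove (2:Fin 4)) = !![a,b,d; i,j,l; m,n,p] := by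
    ext x y; fin_cases x <;> fin_cases y <;> rfl
  rw [hs]
  norm_num [show (((3:Fin 4)):ℕ) = 3 from rfl, show (((2:Fin 4)):ℕ) = 2 from rfl]

end aux

set_option maxHeartbeats 1600000 in
/-- Let `Pq = X^4 + c3 X^3 + c2 X^2 + c1 X + c0` over a commutative ring,
`r` a root of `Pq` (in `AdjoinRoot Pq`), and `M` the matrix of multiplication by
`α = a0 + a1 r + a2 r^2 + a3 r^3` in the basis `{1, r, r^2, r^3}`, with cofactors
`B_{ij}` = `(j,i)` entry of `N(α) M⁻¹`, i.e. `B_{ij} = adjugate M (j,i)`. Then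
`B_{24} B_{13} - B_{14} B_{23} = q3 ⬝ N(α)` where
`q3 = a2^2 - a1 a3 - c3 a2 a3 + c2 a3^2` and `N(α) = det M`. -/
theorem cofactor_identity_q3 (R : Type*) [CommRing R] (c0 c1 c2 c3 a0 a1 a2 a3 : R)
    (Pq : R[X]) (hPq : Pq = X ^ 4 + C c3 * X ^ 3 + C c2 * X ^ 2 + C c1 * X + C c0)
    (M : Matrix (Fin 4) (Fin 4) R)
    (hM : ∀ j : Fin 4,
      (algebraMap R (AdjoinRoot Pq) a0
          + algebraMap R (AdjoinRoot Pq) a1 * AdjoinRoot.root Pq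
          + algebraMap R (AdjoinRoot Pq) a2 * AdjoinRoot.root Pq ^ 2
          + algebraMap R (AdjoinRoot Pq) a3 * AdjoinRoot.root Pq ^ 3)
        * AdjoinRoot.root Pq ^ (j : ℕ)
      = ∑ i : Fin 4, algebraMap R (AdjoinRoot Pq) (M i j) * AdjoinRoot.root Pq ^ (i : ℕ)) :
    M.adjugate 3 1 * M.adjugate 2 0 - M.adjugate 3 0 * M.adjugate 2 1
      = (a2 ^ 2 - a1 * a3 - c3 * a2 * a3 + c2 * a3 ^ 2) * M.det := by
  nontriviality R
  subst hPq
  have hmon : (X ^ 4 + C c3 * X ^ 3 + C c2 * X ^ 2 + C c1 * X + C c0 : R[X]).Monic := by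
    monicity!
  have hdeg : (X ^ 4 + C c3 * X ^ 3 + C c2 * X ^ 2 + C c1 * X + C c0 : R[X]).natDegree = 4 := by
    compute_degree!
  set A := AdjoinRoot (X ^ 4 + C c3 * X ^ 3 + C c2 * X ^ 2 + C c1 * X + C c0 : R[X]) with hA
  set r : A := AdjoinRoot.root _ with hr
  set φ : R →+* A := algebraMap R A with hφ
  have h4 : r ^ 4 = - φ c0 - φ c1 * r - φ c2 * r ^ 2 - φ c3 * r ^ 3 := by
    have h0 := AdjoinRoot.eval₂_root (X ^ 4 + C c3 * X ^ 3 + C c2 * X ^ 2 + C c1 * X + C c0 : R[X])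
    simp only [eval₂_add, eval₂_mul, eval₂_pow, eval₂_X, eval₂_C] at h0
    rw [← AdjoinRoot.algebraMap_eq] at h0
    linear_combination h0
  have li : LinearIndependent R (fun i : Fin 4 => r ^ (i : ℕ)) := by
    have li0 := (AdjoinRoot.powerBasis' hmon).basis.linearIndependent
    rw [PowerBasis.coe_basis] at li0
    have hdim : (AdjoinRoot.powerBasis' hmon).dim = 4 := by
      rw [AdjoinRoot.powerBasis'_dim, hdeg]
    have := li0.comp (Fin.cast hdim.symm) (Fin.cast_injective _)
    simpa [AdjoinRoot.powerBasis'_gen, Function.comp_def] using this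
  set M0 : Matrix (Fin 4) (Fin 4) R :=
    !![a0, -a3*c0, -a2*c0 + a3*c3*c0, -a1*c0 + a2*c3*c0 - a3*(c3^2 - c2)*c0;
       a1, a0 - a3*c1, -a2*c1 + a3*(c3*c1 - c0), -a1*c1 + a2*(c3*c1 - c0) + a3*(c3*c0 - (c3^2 - c2)*c1);
       a2, a1 - a3*c2, a0 - a2*c2 + a3*(c3*c2 - c1), -a1*c2 + a2*(c3*c2 - c1) + a3*(c3*c1 - c0 - (c3^2 - c2)*c2);
       a3, a2 - a3*c3, a1 - a2*c3 + a3*(c3^2 - c2), a0 - a1*c3 + a2*(c3^2 - c2) + a3*(c3*c2 - c1 - (c3^2 - c2)*c3)]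
    with hM0def
  have hM0 : ∀ j : Fin 4,
      (φ a0 + φ a1 * r + φ a2 * r ^ 2 + φ a3 * r ^ 3) * r ^ (j : ℕ)
      = ∑ i : Fin 4, φ (M0 i j) * r ^ (i : ℕ) := by
    intro j
    fin_cases j <;>
      simp [hM0def, Fin.sum_univ_four, map_sub, map_add, map_neg, _root_.map_mul, map_pow,
        show (((2:Fin 4)):ℕ) = 2 from rfl, show (((3:Fin 4)):ℕ) = 3 from rfl]
    · linear_combination φ a3 * h4
    · linear_combination (φ a2 + φ a3 * r - φ a3 * φ c3) * h4
    · linear_combination (φ a1 + φ a2 * r + φ a3 * r^2 - φ a2 * φ c3 - φ a3 * φ c2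
        - φ a3 * φ c3 * r + φ a3 * φ c3 ^ 2) * h4
  have hMeq : M = M0 := by
    ext i j
    have hj : ∑ i : Fin 4, φ (M i j) * r ^ (i : ℕ) = ∑ i : Fin 4, φ (M0 i j) * r ^ (i : ℕ) :=
      (hM j).symm.trans (hM0 j)
    have hsum : ∑ i : Fin 4, (M i j - M0 i j) • r ^ (i : ℕ) = 0 := by
      have hx : ∀ x : Fin 4, (M x j - M0 x j) • r ^ (x:ℕ)
          = φ (M x j) * r ^ (x:ℕ) - φ (M0 x j) * r ^ (x:ℕ) := fun x => by
        rw [Algebra.smul_def, ← hφ, map_sub, sub_mul]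
      simp only [hx, Finset.sum_sub_distrib, hj, sub_self]
    have := Fintype.linearIndependent_iff.mp li (fun i => M i j - M0 i j) hsum i
    exact sub_eq_zero.mp this
  rw [hMeq, hM0def, aux_adj31, aux_adj20, aux_adj30, aux_adj21, aux_det4]
  simp only [Matrix.det_fin_three]
  norm_num [Matrix.cons_val_one, Matrix.cons_val_two, Matrix.head_cons, Matrix.tail_cons]
  ring
end

section
/- Let P be a monic quartic with distinct roots and B_{13}, B_{14} the cofactor polynomials of the multiplication matrix M_α, viewed as polynomials of degree 2 in a0. Let R = Res_{a0}(B_{14}, N(α)) and R0 = Res_{a0}(B_{13}, B_{14}). Then q3^2 · R = R0^2, where q3 = a2^2 - a1 a3 - c3 a2 a3 + c2 a3^2. -/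
open Polynomial Matrix

/-- The resultant of two quadratic polynomials (degree ≤ 2), as the determinant of the
4×4 Sylvester matrix. -/
noncomputable def sylvResultant22 {R : Type*} [CommRing R] (f g : Polynomial R) : R :=
  Matrix.det !![f.coeff 2, f.coeff 1, f.coeff 0, 0;
                0, f.coeff 2, f.coeff 1, f.coeff 0;
                g.coeff 2, g.coeff 1, g.coeff 0, 0;
                0, g.coeff 2, g.coeff 1, g.coeff 0]

/-- The resultant of a quadratic polynomial `f` and a quartic polynomial `g`, as the
determinant of the 6×6 Sylvester matrix. -/
noncomputable def sylvResultant24 {R : Type*} [CommRing R] (f g : Polynomial R) : R :=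
  Matrix.det !![f.coeff 2, f.coeff 1, f.coeff 0, 0, 0, 0;
                0, f.coeff 2, f.coeff 1, f.coeff 0, 0, 0;
                0, 0, f.coeff 2, f.coeff 1, f.coeff 0, 0;
                0, 0, 0, f.coeff 2, f.coeff 1, f.coeff 0;
                g.coeff 4, g.coeff 3, g.coeff 2, g.coeff 1, g.coeff 0, 0;
                0, g.coeff 4, g.coeff 3, g.coeff 2, g.coeff 1, g.coeff 0]

set_option maxRecDepth 100000 in
set_option maxHeartbeats 1600000 in
private lemma det_fin_4 {R : Type*} [CommRing R] (A : Matrix (Fin 4) (Fin 4) R) :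
    A.det = A 0 0 * A 1 1 * A 2 2 * A 3 3 - A 0 0 * A 1 1 * A 2 3 * A 3 2 - A 0 0 * A 1 2 * A 2 1 * A 3 3 + A 0 0 * A 1 2 * A 2 3 * A 3 1 + A 0 0 * A 1 3 * A 2 1 * A 3 2 - A 0 0 * A 1 3 * A 2 2 * A 3 1 - A 0 1 * A 1 0 * A 2 2 * A 3 3 + A 0 1 * A 1 0 * A 2 3 * A 3 2 + A 0 1 * A 1 2 * A 2 0 * A 3 3 - A 0 1 * A 1 2 * A 2 3 * A 3 0 - A 0 1 * A 1 3 * A 2 0 * A 3 2 + A 0 1 * A 1 3 * A 2 2 * A 3 0 + A 0 2 * A 1 0 * A 2 1 * A 3 3 - A 0 2 * A 1 0 * A 2 3 * A 3 1 - A 0 2 * A 1 1 * A 2 0 * A 3 3 + A 0 2 * A 1 1 * A 2 3 * A 3 0 + A 0 2 * A 1 3 * A 2 0 * A 3 1 - A 0 2 * A 1 3 * A 2 1 * A 3 0 - A 0 3 * A 1 0 * A 2 1 * A 3 2 + A 0 3 * A 1 0 * A 2 2 * A 3 1 + A 0 3 * A 1 1 * A 2 0 * A 3 2 - A 0 3 *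 A 1 1 * A 2 2 * A 3 0 - A 0 3 * A 1 2 * A 2 0 * A 3 1 + A 0 3 * A 1 2 * A 2 1 * A 3 0 := by
  simp only [Matrix.det_succ_row_zero, Fin.sum_univ_succ, Fin.sum_univ_zero, Matrix.of_apply,
    Matrix.cons_val', Matrix.cons_val_zero, Matrix.cons_val_succ, Matrix.cons_val_fin_one,
    Matrix.empty_val', Matrix.head_cons, Matrix.head_fin_const, Matrix.submatrix_apply,
    Matrix.submatrix_submatrix, Function.comp_apply, Fin.zero_succAbove, Fin.succ_succAbove_zero,
    Fin.succ_succAbove_succ, Matrix.det_fin_one, Matrix.det_unique, Fin.default_eq_zero,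
    Finset.univ_unique, Finset.sum_singleton, Fin.val_zero, Fin.val_succ, pow_zero, pow_succ,
    zero_mul, mul_zero, one_mul, mul_one, neg_zero, add_zero, zero_add, neg_mul, mul_neg,
    neg_neg, zero_sub, sub_zero]
  try simp only [Fin.succ_zero_eq_one, Fin.succ_one_eq_two, show ((2:Fin 3).succ : Fin 4) = 3 from rfl,
    show ((2:Fin 4).succ : Fin 5) = 3 from rfl, show ((3:Fin 4).succ : Fin 5) = 4 from rfl,
    show ((2:Fin 5).succ : Fin 6) = 3 from rfl, show ((3:Fin 5).succ : Fin 6) = 4 from rfl,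
    show ((4:Fin 5).succ : Fin 6) = 5 from rfl] <;> try rfl
  ring

set_option maxRecDepth 100000 in
set_option maxHeartbeats 1600000 in
private lemma sylv4 {R : Type*} [CommRing R] (f0 f1 f2 g0 g1 g2 : R) :
    Matrix.det !![f2, f1, f0, 0; 0, f2, f1, f0; g2, g1, g0, 0; 0, g2, g1, g0]
      = g0 ^ 2 * f2 ^ 2 - g0 * g1 * f1 * f2 - 2 * g0 * g2 * f0 * f2 + g0 * g2 * f1 ^ 2 + g1 ^ 2 * f0 * f2 - g1 * g2 * f0 * f1 + g2 ^ 2 * f0 ^ 2 := by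
  simp only [Matrix.det_succ_row_zero, Fin.sum_univ_succ, Fin.sum_univ_zero, Matrix.of_apply,
    Matrix.cons_val', Matrix.cons_val_zero, Matrix.cons_val_succ, Matrix.cons_val_fin_one,
    Matrix.empty_val', Matrix.head_cons, Matrix.head_fin_const, Matrix.submatrix_apply,
    Matrix.submatrix_submatrix, Function.comp_apply, Fin.zero_succAbove, Fin.succ_succAbove_zero,
    Fin.succ_succAbove_succ, Matrix.det_fin_one, Matrix.det_unique, Fin.default_eq_zero,
    Finset.univ_unique, Finset.sum_singleton, Fin.val_zero, Fin.val_succ, pow_zero, pow_succ,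
    zero_mul, mul_zero, one_mul, mul_one, neg_zero, add_zero, zero_add, neg_mul, mul_neg,
    neg_neg, zero_sub, sub_zero]
  try simp only [Fin.succ_zero_eq_one, Fin.succ_one_eq_two, show ((2:Fin 3).succ : Fin 4) = 3 from rfl,
    show ((2:Fin 4).succ : Fin 5) = 3 from rfl, show ((3:Fin 4).succ : Fin 5) = 4 from rfl,
    show ((2:Fin 5).succ : Fin 6) = 3 from rfl, show ((3:Fin 5).succ : Fin 6) = 4 from rfl,
    show ((4:Fin 5).succ : Fin 6) = 5 from rfl] <;> try rfl
  ring

set_option maxRecDepth 100000 in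
set_option maxHeartbeats 1600000 in
private lemma sylv6 {R : Type*} [CommRing R] (g0 g1 g2 m0 m1 m2 m3 m4 : R) :
    Matrix.det !![g2, g1, g0, 0, 0, 0;
                  0, g2, g1, g0, 0, 0;
                  0, 0, g2, g1, g0, 0;
                  0, 0, 0, g2, g1, g0;
                  m4, m3, m2, m1, m0, 0;
                  0, m4, m3, m2, m1, m0]
      = g0 ^ 4 * m4 ^ 2 - g0 ^ 3 * g1 * m3 * m4 - 2 * g0 ^ 3 * g2 * m2 * m4 + g0 ^ 3 * g2 * m3 ^ 2 + g0 ^ 2 * g1 ^ 2 * m2 * m4 + 3 * g0 ^ 2 * g1 * g2 * m1 * m4 - g0 ^ 2 * g1 * g2 * m2 * m3 + 2 * g0 ^ 2 * g2 ^ 2 * m0 * m4 - 2 * g0 ^ 2 * g2 ^ 2 * m1 * m3 + g0 ^ 2 * g2 ^ 2 * m2 ^ 2 - g0 * g1 ^ 3 * m1 * m4 - 4 * g0 * g1 ^ 2 * g2 * m0 * m4 + g0 * g1 ^ 2 * g2 * m1 * m3 + 3 * g0 * g1 * g2 ^ 2 * m0 * m3 - g0 * g1 * g2 ^ 2 * m1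 * m2 - 2 * g0 * g2 ^ 3 * m0 * m2 + g0 * g2 ^ 3 * m1 ^ 2 + g1 ^ 4 * m0 * m4 - g1 ^ 3 * g2 * m0 * m3 + g1 ^ 2 * g2 ^ 2 * m0 * m2 - g1 * g2 ^ 3 * m0 * m1 + g2 ^ 4 * m0 ^ 2 := by
  simp only [Matrix.det_succ_row_zero, Fin.sum_univ_succ, Fin.sum_univ_zero, Matrix.of_apply,
    Matrix.cons_val', Matrix.cons_val_zero, Matrix.cons_val_succ, Matrix.cons_val_fin_one,
    Matrix.empty_val', Matrix.head_cons, Matrix.head_fin_const, Matrix.submatrix_apply,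
    Matrix.submatrix_submatrix, Function.comp_apply, Fin.zero_succAbove, Fin.succ_succAbove_zero,
    Fin.succ_succAbove_succ, Matrix.det_fin_one, Matrix.det_unique, Fin.default_eq_zero,
    Finset.univ_unique, Finset.sum_singleton, Fin.val_zero, Fin.val_succ, pow_zero, pow_succ,
    zero_mul, mul_zero, one_mul, mul_one, neg_zero, add_zero, zero_add, neg_mul, mul_neg,
    neg_neg, zero_sub, sub_zero]
  try simp only [Fin.succ_zero_eq_one, Fin.succ_one_eq_two, show ((2:Fin 3).succ : Fin 4) = 3 from rfl,
    show ((2:Fin 4).succ : Fin 5) = 3 from rfl, show ((3:Fin 4).succ : Fin 5) = 4 from rfl,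
    show ((2:Fin 5).succ : Fin 6) = 3 from rfl, show ((3:Fin 5).succ : Fin 6) = 4 from rfl,
    show ((4:Fin 5).succ : Fin 6) = 5 from rfl] <;> try rfl
  ring

set_option maxHeartbeats 1600000 in
private lemma key {R : Type*} [CommRing R] (f0 f1 f2 g0 g1 g2 h0 h1 h2 q n0 n1 n2 n3 n4 : R)
    (e0 : q * n0 = f0 ^ 2 - g0 * h0)
    (e1 : q * n1 = 2 * f0 * f1 - g0 * h1 - g1 * h0)
    (e2 : q * n2 = f1 ^ 2 + 2 * f0 * f2 - g0 * h2 - g1 * h1 - g2 * h0)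
    (e3 : q * n3 = 2 * f1 * f2 - g1 * h2 - g2 * h1)
    (e4 : q * n4 = f2 ^ 2 - g2 * h2) :
    q ^ 2 * Matrix.det !![g2, g1, g0, 0, 0, 0;
                          0, g2, g1, g0, 0, 0;
                          0, 0, g2, g1, g0, 0;
                          0, 0, 0, g2, g1, g0;
                          n4, n3, n2, n1, n0, 0;
                          0, n4, n3, n2, n1, n0]
      = (Matrix.det !![f2, f1, f0, 0;
                       0, f2, f1, f0;
                       g2, g1, g0, 0;
                       0, g2, g1, g0]) ^ 2 := by
  rw [sylv6, sylv4]
  have hsc : q ^ 2 * (g0 ^ 4 * n4 ^ 2 - g0 ^ 3 * g1 * n3 * n4 - 2 * g0 ^ 3 * g2 * n2 * n4 + g0 ^ 3 * g2 * n3 ^ 2 + g0 ^ 2 * g1 ^ 2 * n2 * n4 + 3 * g0 ^ 2 * g1 * g2 * n1 * n4 - g0 ^ 2 * g1 * g2 * n2 * n3 + 2 * g0 ^ 2 * g2 ^ 2 * n0 * n4 - 2 * g0 ^ 2 * g2 ^ 2 * n1 * n3 + g0 ^ 2 * g2 ^ 2 * n2 ^ 2 - g0 * g1 ^ 3 * n1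 * n4 - 4 * g0 * g1 ^ 2 * g2 * n0 * n4 + g0 * g1 ^ 2 * g2 * n1 * n3 + 3 * g0 * g1 * g2 ^ 2 * n0 * n3 - g0 * g1 * g2 ^ 2 * n1 * n2 - 2 * g0 * g2 ^ 3 * n0 * n2 + g0 * g2 ^ 3 * n1 ^ 2 + g1 ^ 4 * n0 * n4 - g1 ^ 3 * g2 * n0 * n3 + g1 ^ 2 * g2 ^ 2 * n0 * n2 - g1 * g2 ^ 3 * n0 * n1 + g2 ^ 4 * n0 ^ 2) = g0 ^ 4 * (q * n4) ^ 2 - g0 ^ 3 * g1 * (q * n3) * (q * n4) - 2 * g0 ^ 3 * g2 * (q * n2) * (q * n4) + g0 ^ 3 * g2 * (q * n3) ^ 2 + g0 ^ 2 * g1 ^ 2 * (q * n2) * (q * n4) + 3 * g0 ^ 2 * g1 * g2 * (q * n1) * (q * n4) - g0 ^ 2 * g1 * g2 * (q * n2) * (q * n3) + 2 * g0 ^ 2 * g2 ^ 2 * (q * n0) * (q * n4) - 2 * g0 ^ 2 * g2 ^ 2 * (q * n1) * (q * n3) + g0 ^ 2 * g2 ^ 2 * (q * n2) ^ 2 - g0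 * g1 ^ 3 * (q * n1) * (q * n4) - 4 * g0 * g1 ^ 2 * g2 * (q * n0) * (q * n4) + g0 * g1 ^ 2 * g2 * (q * n1) * (q * n3) + 3 * g0 * g1 * g2 ^ 2 * (q * n0) * (q * n3) - g0 * g1 * g2 ^ 2 * (q * n1) * (q * n2) - 2 * g0 * g2 ^ 3 * (q * n0) * (q * n2) + g0 * g2 ^ 3 * (q * n1) ^ 2 + g1 ^ 4 * (q * n0) * (q * n4) - g1 ^ 3 * g2 * (q * n0) * (q * n3) + g1 ^ 2 * g2 ^ 2 * (q * n0) * (q * n2) - g1 * g2 ^ 3 * (q * n0) * (q * n1) + g2 ^ 4 * (q * n0) ^ 2 := by ring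
  rw [hsc, e0, e1, e2, e3, e4]
  ring

set_option maxRecDepth 100000 in
set_option maxHeartbeats 4000000 in
/-- Let `P = X^4 + c3 X^3 + c2 X^2 + c1 X + c0` be a monic quartic
over a field `F` with distinct roots `r1, r2, r3, r4`, and let `M` be the matrix of
multiplication by `α = a0 + a1 r + a2 r^2 + a3 r^3` in the power basis of a root `r`,
where `a0` is an indeterminate (so `M` has entries in `F[a0]`).  With the cofactors
`B13 = adjugate M (2,0)`, `B14 = adjugate M (3,0)` (quadratic in `a0`), and
`R = Res_{a0}(B14, N(α))`, `R0 = Res_{a0}(B13, B14)`, one has `q3^2 ⬝ R = R0^2`,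
where `q3 = a2^2 - a1 a3 - c3 a2 a3 + c2 a3^2`. -/
theorem resultant_identity_q3 (F : Type*) [Field F] (c0 c1 c2 c3 a1 a2 a3 : F)
    (r1 r2 r3 r4 : F)
    (hdist : r1 ≠ r2 ∧ r1 ≠ r3 ∧ r1 ≠ r4 ∧ r2 ≠ r3 ∧ r2 ≠ r4 ∧ r3 ≠ r4)
    (hfact : (X ^ 4 + C c3 * X ^ 3 + C c2 * X ^ 2 + C c1 * X + C c0 : F[X])
        = (X - C r1) * (X - C r2) * (X - C r3) * (X - C r4))
    (Pq : (Polynomial F)[X])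
    (hPq : Pq = X ^ 4 + C (C c3) * X ^ 3 + C (C c2) * X ^ 2 + C (C c1) * X + C (C c0))
    (M : Matrix (Fin 4) (Fin 4) (Polynomial F))
    (hM : ∀ j : Fin 4,
      (algebraMap (Polynomial F) (AdjoinRoot Pq) Polynomial.X
          + algebraMap (Polynomial F) (AdjoinRoot Pq) (C a1) * AdjoinRoot.root Pq
          + algebraMap (Polynomial F) (AdjoinRoot Pq) (C a2) * AdjoinRoot.root Pq ^ 2
          + algebraMap (Polynomial F) (AdjoinRoot Pq) (C a3) * AdjoinRoot.root Pq ^ 3)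
        * AdjoinRoot.root Pq ^ (j : ℕ)
      = ∑ i : Fin 4,
          algebraMap (Polynomial F) (AdjoinRoot Pq) (M i j) * AdjoinRoot.root Pq ^ (i : ℕ)) :
    (a2 ^ 2 - a1 * a3 - c3 * a2 * a3 + c2 * a3 ^ 2) ^ 2
        * sylvResultant24 (M.adjugate 3 0) M.det
      = (sylvResultant22 (M.adjugate 2 0) (M.adjugate 3 0)) ^ 2 := by
  have hPdeg : Pq.degree = 4 := by rw [hPq]; compute_degree!
  have hSR0 : (C (X) + C (C a1) * X + C (C a2) * X ^ 2 + C (C a3) * X ^ 3) = C (M 0 0) + C (M 1 0) * X + C (M 2 0) * X ^ 2 + C (M 3 0) * X ^ 3 := by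
    have hj := hM 0
    rw [Fin.sum_univ_four] at hj
    have hmk : AdjoinRoot.mk Pq ((C X + C (C a1) * X + C (C a2) * X ^ 2 + C (C a3) * X ^ 3) * X ^ 0) = AdjoinRoot.mk Pq (C (M 0 0) + C (M 1 0) * X + C (M 2 0) * X ^ 2 + C (M 3 0) * X ^ 3) := by
      simpa only [_root_.map_mul, _root_.map_add, _root_.map_pow, AdjoinRoot.mk_C, AdjoinRoot.mk_X,
        AdjoinRoot.algebraMap_eq, pow_zero, pow_one, mul_one, one_mul,
        show ((0:Fin 4):ℕ) = 0 from rfl, show ((1:Fin 4):ℕ) = 1 from rfl,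
        show ((2:Fin 4):ℕ) = 2 from rfl, show ((3:Fin 4):ℕ) = 3 from rfl] using hj
    rw [AdjoinRoot.mk_eq_mk] at hmk
    have hLS : Pq ∣ ((C X + C (C a1) * X + C (C a2) * X ^ 2 + C (C a3) * X ^ 3) * X ^ 0) - (C (X) + C (C a1) * X + C (C a2) * X ^ 2 + C (C a3) * X ^ 3) := by
      refine ⟨0, ?_⟩
      rw [hPq]
      try simp only [_root_.map_add, _root_.map_sub, _root_.map_mul, _root_.map_neg, _root_.map_pow, _root_.map_one, _root_.map_ofNat, _root_.map_zero]
      ring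
    have hdvd : Pq ∣ (C (X) + C (C a1) * X + C (C a2) * X ^ 2 + C (C a3) * X ^ 3) - (C (M 0 0) + C (M 1 0) * X + C (M 2 0) * X ^ 2 + C (M 3 0) * X ^ 3) := by
      have h2 : (C (X) + C (C a1) * X + C (C a2) * X ^ 2 + C (C a3) * X ^ 3) - (C (M 0 0) + C (M 1 0) * X + C (M 2 0) * X ^ 2 + C (M 3 0) * X ^ 3) = (((C X + C (C a1) * X + C (C a2) * X ^ 2 + C (C a3) * X ^ 3) * X ^ 0) - (C (M 0 0) + C (M 1 0) * X + C (M 2 0) * X ^ 2 + C (M 3 0) * X ^ 3)) - (((C X + C (C a1) * X + C (C a2) * X ^ 2 + C (C a3) * X ^ 3) * X ^ 0) - (C (X) + C (C a1) * X + C (C a2) * X ^ 2 + C (C a3) * X ^ 3)) := by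
        ring
      rw [h2]; exact dvd_sub hmk hLS
    have hz : (C (X) + C (C a1) * X + C (C a2) * X ^ 2 + C (C a3) * X ^ 3) - (C (M 0 0) + C (M 1 0) * X + C (M 2 0) * X ^ 2 + C (M 3 0) * X ^ 3) = 0 := by
      refine Polynomial.eq_zero_of_dvd_of_degree_lt hdvd ?_
      rw [hPdeg]
      have hle : ((C (X) + C (C a1) * X + C (C a2) * X ^ 2 + C (C a3) * X ^ 3) - (C (M 0 0) + C (M 1 0) * X + C (M 2 0) * X ^ 2 + C (M 3 0) * X ^ 3)).degree ≤ 3 := by compute_degree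
      exact lt_of_le_of_lt hle (by decide)
    exact sub_eq_zero.mp hz
  have hm00 : (X) = M 0 0 := by
    have hc := congrArg (fun p => Polynomial.coeff p 0) hSR0
    simp only [Polynomial.coeff_add, Polynomial.coeff_C, Polynomial.coeff_C_mul,
      Polynomial.coeff_X_pow, Polynomial.coeff_X_zero, Polynomial.coeff_X_one,
      Polynomial.coeff_X] at hc
    norm_num at hc
    linear_combination hc
  have hm10 : (C a1) = M 1 0 := by
    have hc := congrArg (fun p => Polynomial.coeff p 1) hSR0
    simp only [Polynomial.coeff_add, Polynomial.coeff_C, Polynomial.coeff_C_mul,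
      Polynomial.coeff_X_pow, Polynomial.coeff_X_zero, Polynomial.coeff_X_one,
      Polynomial.coeff_X] at hc
    norm_num at hc
    linear_combination hc
  have hm20 : (C a2) = M 2 0 := by
    have hc := congrArg (fun p => Polynomial.coeff p 2) hSR0
    simp only [Polynomial.coeff_add, Polynomial.coeff_C, Polynomial.coeff_C_mul,
      Polynomial.coeff_X_pow, Polynomial.coeff_X_zero, Polynomial.coeff_X_one,
      Polynomial.coeff_X] at hc
    norm_num at hc
    linear_combination hc
  have hm30 : (C a3) = M 3 0 := by
    have hc := congrArg (fun p => Polynomial.coeff p 3) hSR0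
    simp only [Polynomial.coeff_add, Polynomial.coeff_C, Polynomial.coeff_C_mul,
      Polynomial.coeff_X_pow, Polynomial.coeff_X_zero, Polynomial.coeff_X_one,
      Polynomial.coeff_X] at hc
    norm_num at hc
    linear_combination hc
  have hSR1 : (C (-C a3 * C c0) + C (X - C a3 * C c1) * X + C (C a1 - C a3 * C c2) * X ^ 2 + C (C a2 - C a3 * C c3) * X ^ 3) = C (M 0 1) + C (M 1 1) * X + C (M 2 1) * X ^ 2 + C (M 3 1) * X ^ 3 := by
    have hj := hM 1
    rw [Fin.sum_univ_four] at hj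
    have hmk : AdjoinRoot.mk Pq ((C X + C (C a1) * X + C (C a2) * X ^ 2 + C (C a3) * X ^ 3) * X ^ 1) = AdjoinRoot.mk Pq (C (M 0 1) + C (M 1 1) * X + C (M 2 1) * X ^ 2 + C (M 3 1) * X ^ 3) := by
      simpa only [_root_.map_mul, _root_.map_add, _root_.map_pow, AdjoinRoot.mk_C, AdjoinRoot.mk_X,
        AdjoinRoot.algebraMap_eq, pow_zero, pow_one, mul_one, one_mul,
        show ((0:Fin 4):ℕ) = 0 from rfl, show ((1:Fin 4):ℕ) = 1 from rfl,
        show ((2:Fin 4):ℕ) = 2 from rfl, show ((3:Fin 4):ℕ) = 3 from rfl] using hj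
    rw [AdjoinRoot.mk_eq_mk] at hmk
    have hLS : Pq ∣ ((C X + C (C a1) * X + C (C a2) * X ^ 2 + C (C a3) * X ^ 3) * X ^ 1) - (C (-C a3 * C c0) + C (X - C a3 * C c1) * X + C (C a1 - C a3 * C c2) * X ^ 2 + C (C a2 - C a3 * C c3) * X ^ 3) := by
      refine ⟨(C (C a3)), ?_⟩
      rw [hPq]
      try simp only [_root_.map_add, _root_.map_sub, _root_.map_mul, _root_.map_neg, _root_.map_pow, _root_.map_one, _root_.map_ofNat, _root_.map_zero]
      ring
    have hdvd : Pq ∣ (C (-C a3 * C c0) + C (X - C a3 * C c1) * X + C (C a1 - C a3 * C c2) * X ^ 2 + C (C a2 - C a3 * C c3) * X ^ 3) - (C (M 0 1) + C (M 1 1) * X + C (M 2 1) * X ^ 2 + C (M 3 1) * X ^ 3) := by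
      have h2 : (C (-C a3 * C c0) + C (X - C a3 * C c1) * X + C (C a1 - C a3 * C c2) * X ^ 2 + C (C a2 - C a3 * C c3) * X ^ 3) - (C (M 0 1) + C (M 1 1) * X + C (M 2 1) * X ^ 2 + C (M 3 1) * X ^ 3) = (((C X + C (C a1) * X + C (C a2) * X ^ 2 + C (C a3) * X ^ 3) * X ^ 1) - (C (M 0 1) + C (M 1 1) * X + C (M 2 1) * X ^ 2 + C (M 3 1) * X ^ 3)) - (((C X + C (C a1) * X + C (C a2) * X ^ 2 + C (C a3) * X ^ 3) * X ^ 1) - (C (-C a3 * C c0) + C (X - C a3 * C c1) * X + C (C a1 - C a3 * C c2) * X ^ 2 + C (C a2 - C a3 * C c3) * X ^ 3)) := by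
        ring
      rw [h2]; exact dvd_sub hmk hLS
    have hz : (C (-C a3 * C c0) + C (X - C a3 * C c1) * X + C (C a1 - C a3 * C c2) * X ^ 2 + C (C a2 - C a3 * C c3) * X ^ 3) - (C (M 0 1) + C (M 1 1) * X + C (M 2 1) * X ^ 2 + C (M 3 1) * X ^ 3) = 0 := by
      refine Polynomial.eq_zero_of_dvd_of_degree_lt hdvd ?_
      rw [hPdeg]
      have hle : ((C (-C a3 * C c0) + C (X - C a3 * C c1) * X + C (C a1 - C a3 * C c2) * X ^ 2 + C (C a2 - C a3 * C c3) * X ^ 3) - (C (M 0 1) + C (M 1 1) * X + C (M 2 1) * X ^ 2 + C (M 3 1) * X ^ 3)).degree ≤ 3 := by compute_degree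
      exact lt_of_le_of_lt hle (by decide)
    exact sub_eq_zero.mp hz
  have hm01 : (-C a3 * C c0) = M 0 1 := by
    have hc := congrArg (fun p => Polynomial.coeff p 0) hSR1
    simp only [Polynomial.coeff_add, Polynomial.coeff_C, Polynomial.coeff_C_mul,
      Polynomial.coeff_X_pow, Polynomial.coeff_X_zero, Polynomial.coeff_X_one,
      Polynomial.coeff_X] at hc
    norm_num at hc
    linear_combination hc
  have hm11 : (X - C a3 * C c1) = M 1 1 := by
    have hc := congrArg (fun p => Polynomial.coeff p 1) hSR1
    simp only [Polynomial.coeff_add, Polynomial.coeff_C, Polynomial.coeff_C_mul,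
      Polynomial.coeff_X_pow, Polynomial.coeff_X_zero, Polynomial.coeff_X_one,
      Polynomial.coeff_X] at hc
    norm_num at hc
    linear_combination hc
  have hm21 : (C a1 - C a3 * C c2) = M 2 1 := by
    have hc := congrArg (fun p => Polynomial.coeff p 2) hSR1
    simp only [Polynomial.coeff_add, Polynomial.coeff_C, Polynomial.coeff_C_mul,
      Polynomial.coeff_X_pow, Polynomial.coeff_X_zero, Polynomial.coeff_X_one,
      Polynomial.coeff_X] at hc
    norm_num at hc
    linear_combination hc
  have hm31 : (C a2 - C a3 * C c3) = M 3 1 := by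
    have hc := congrArg (fun p => Polynomial.coeff p 3) hSR1
    simp only [Polynomial.coeff_add, Polynomial.coeff_C, Polynomial.coeff_C_mul,
      Polynomial.coeff_X_pow, Polynomial.coeff_X_zero, Polynomial.coeff_X_one,
      Polynomial.coeff_X] at hc
    norm_num at hc
    linear_combination hc
  have hSR2 : (C (-C a2 * C c0 + C a3 * C c0 * C c3) + C (-C a2 * C c1 - C a3 * C c0 + C a3 * C c1 * C c3) * X + C (X - C a2 * C c2 - C a3 * C c1 + C a3 * C c2 * C c3) * X ^ 2 + C (C a1 - C a2 * C c3 - C a3 * C c2 + C a3 * C c3 ^ 2) * X ^ 3) = C (M 0 2) + C (M 1 2) * X + C (M 2 2) * X ^ 2 + C (M 3 2) * X ^ 3 := by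
    have hj := hM 2
    rw [Fin.sum_univ_four] at hj
    have hmk : AdjoinRoot.mk Pq ((C X + C (C a1) * X + C (C a2) * X ^ 2 + C (C a3) * X ^ 3) * X ^ 2) = AdjoinRoot.mk Pq (C (M 0 2) + C (M 1 2) * X + C (M 2 2) * X ^ 2 + C (M 3 2) * X ^ 3) := by
      simpa only [_root_.map_mul, _root_.map_add, _root_.map_pow, AdjoinRoot.mk_C, AdjoinRoot.mk_X,
        AdjoinRoot.algebraMap_eq, pow_zero, pow_one, mul_one, one_mul,
        show ((0:Fin 4):ℕ) = 0 from rfl, show ((1:Fin 4):ℕ) = 1 from rfl,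
        show ((2:Fin 4):ℕ) = 2 from rfl, show ((3:Fin 4):ℕ) = 3 from rfl] using hj
    rw [AdjoinRoot.mk_eq_mk] at hmk
    have hLS : Pq ∣ ((C X + C (C a1) * X + C (C a2) * X ^ 2 + C (C a3) * X ^ 3) * X ^ 2) - (C (-C a2 * C c0 + C a3 * C c0 * C c3) + C (-C a2 * C c1 - C a3 * C c0 + C a3 * C c1 * C c3) * X + C (X - C a2 * C c2 - C a3 * C c1 + C a3 * C c2 * C c3) * X ^ 2 + C (C a1 - C a2 * C c3 - C a3 * C c2 + C a3 * C c3 ^ 2) * X ^ 3) := by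
      refine ⟨(C (C a2)) - (C (C a3)) * (C (C c3)) + (C (C a3)) * X, ?_⟩
      rw [hPq]
      try simp only [_root_.map_add, _root_.map_sub, _root_.map_mul, _root_.map_neg, _root_.map_pow, _root_.map_one, _root_.map_ofNat, _root_.map_zero]
      ring
    have hdvd : Pq ∣ (C (-C a2 * C c0 + C a3 * C c0 * C c3) + C (-C a2 * C c1 - C a3 * C c0 + C a3 * C c1 * C c3) * X + C (X - C a2 * C c2 - C a3 * C c1 + C a3 * C c2 * C c3) * X ^ 2 + C (C a1 - C a2 * C c3 - C a3 * C c2 + C a3 * C c3 ^ 2) * X ^ 3) - (C (M 0 2) + C (M 1 2) * X + C (M 2 2) * X ^ 2 + C (M 3 2) * X ^ 3) := by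
      have h2 : (C (-C a2 * C c0 + C a3 * C c0 * C c3) + C (-C a2 * C c1 - C a3 * C c0 + C a3 * C c1 * C c3) * X + C (X - C a2 * C c2 - C a3 * C c1 + C a3 * C c2 * C c3) * X ^ 2 + C (C a1 - C a2 * C c3 - C a3 * C c2 + C a3 * C c3 ^ 2) * X ^ 3) - (C (M 0 2) + C (M 1 2) * X + C (M 2 2) * X ^ 2 + C (M 3 2) * X ^ 3) = (((C X + C (C a1) * X + C (C a2) * X ^ 2 + C (C a3) * X ^ 3) * X ^ 2) - (C (M 0 2) + C (M 1 2) * X + C (M 2 2) * X ^ 2 + C (M 3 2) * X ^ 3)) - (((C X + C (C a1) * X + C (C a2) * X ^ 2 + C (C a3) * X ^ 3) * X ^ 2) - (C (-C a2 * C c0 + C a3 * C c0 * C c3) + C (-C a2 * C c1 - C a3 * C c0 + C a3 * C c1 * C c3) * X + C (X - C a2 * C c2 - C a3 * C c1 + C a3 * C c2 * C c3) * X ^ 2 + C (C a1 - C a2 * C c3 - C a3 * C c2 + C a3 * C c3 ^ 2) * X ^ 3)) := by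
        ring
      rw [h2]; exact dvd_sub hmk hLS
    have hz : (C (-C a2 * C c0 + C a3 * C c0 * C c3) + C (-C a2 * C c1 - C a3 * C c0 + C a3 * C c1 * C c3) * X + C (X - C a2 * C c2 - C a3 * C c1 + C a3 * C c2 * C c3) * X ^ 2 + C (C a1 - C a2 * C c3 - C a3 * C c2 + C a3 * C c3 ^ 2) * X ^ 3) - (C (M 0 2) + C (M 1 2) * X + C (M 2 2) * X ^ 2 + C (M 3 2) * X ^ 3) = 0 := by
      refine Polynomial.eq_zero_of_dvd_of_degree_lt hdvd ?_
      rw [hPdeg]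
      have hle : ((C (-C a2 * C c0 + C a3 * C c0 * C c3) + C (-C a2 * C c1 - C a3 * C c0 + C a3 * C c1 * C c3) * X + C (X - C a2 * C c2 - C a3 * C c1 + C a3 * C c2 * C c3) * X ^ 2 + C (C a1 - C a2 * C c3 - C a3 * C c2 + C a3 * C c3 ^ 2) * X ^ 3) - (C (M 0 2) + C (M 1 2) * X + C (M 2 2) * X ^ 2 + C (M 3 2) * X ^ 3)).degree ≤ 3 := by compute_degree
      exact lt_of_le_of_lt hle (by decide)
    exact sub_eq_zero.mp hz
  have hm02 : (-C a2 * C c0 + C a3 * C c0 * C c3) = M 0 2 := by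
    have hc := congrArg (fun p => Polynomial.coeff p 0) hSR2
    simp only [Polynomial.coeff_add, Polynomial.coeff_C, Polynomial.coeff_C_mul,
      Polynomial.coeff_X_pow, Polynomial.coeff_X_zero, Polynomial.coeff_X_one,
      Polynomial.coeff_X] at hc
    norm_num at hc
    linear_combination hc
  have hm12 : (-C a2 * C c1 - C a3 * C c0 + C a3 * C c1 * C c3) = M 1 2 := by
    have hc := congrArg (fun p => Polynomial.coeff p 1) hSR2
    simp only [Polynomial.coeff_add, Polynomial.coeff_C, Polynomial.coeff_C_mul,
      Polynomial.coeff_X_pow, Polynomial.coeff_X_zero, Polynomial.coeff_X_one,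
      Polynomial.coeff_X] at hc
    norm_num at hc
    linear_combination hc
  have hm22 : (X - C a2 * C c2 - C a3 * C c1 + C a3 * C c2 * C c3) = M 2 2 := by
    have hc := congrArg (fun p => Polynomial.coeff p 2) hSR2
    simp only [Polynomial.coeff_add, Polynomial.coeff_C, Polynomial.coeff_C_mul,
      Polynomial.coeff_X_pow, Polynomial.coeff_X_zero, Polynomial.coeff_X_one,
      Polynomial.coeff_X] at hc
    norm_num at hc
    linear_combination hc
  have hm32 : (C a1 - C a2 * C c3 - C a3 * C c2 + C a3 * C c3 ^ 2) = M 3 2 := by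
    have hc := congrArg (fun p => Polynomial.coeff p 3) hSR2
    simp only [Polynomial.coeff_add, Polynomial.coeff_C, Polynomial.coeff_C_mul,
      Polynomial.coeff_X_pow, Polynomial.coeff_X_zero, Polynomial.coeff_X_one,
      Polynomial.coeff_X] at hc
    norm_num at hc
    linear_combination hc
  have hSR3 : (C (-C a1 * C c0 + C a2 * C c0 * C c3 + C a3 * C c0 * C c2 - C a3 * C c0 * C c3 ^ 2) + C (-C a1 * C c1 - C a2 * C c0 + C a2 * C c1 * C c3 + C a3 * C c0 * C c3 + C a3 * C c1 * C c2 - C a3 * C c1 * C c3 ^ 2) * X + C (-C a1 * C c2 - C a2 * C c1 + C a2 * C c2 * C c3 - C a3 * C c0 + C a3 * C c1 * C c3 + C a3 * C c2 ^ 2 - C a3 * C c2 * C c3 ^ 2) * X ^ 2 + C (X - C a1 * C c3 - C a2 * C c2 + C a2 * C c3 ^ 2 - C a3 * C c1 + 2 * C a3 * C c2 * C c3 - C a3 * C c3 ^ 3) * X ^ 3) = C (M 0 3) + C (M 1 3) * X + C (M 2 3) * X ^ 2 + C (M 3 3) * X ^ 3 := by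
    have hj := hM 3
    rw [Fin.sum_univ_four] at hj
    have hmk : AdjoinRoot.mk Pq ((C X + C (C a1) * X + C (C a2) * X ^ 2 + C (C a3) * X ^ 3) * X ^ 3) = AdjoinRoot.mk Pq (C (M 0 3) + C (M 1 3) * X + C (M 2 3) * X ^ 2 + C (M 3 3) * X ^ 3) := by
      simpa only [_root_.map_mul, _root_.map_add, _root_.map_pow, AdjoinRoot.mk_C, AdjoinRoot.mk_X,
        AdjoinRoot.algebraMap_eq, pow_zero, pow_one, mul_one, one_mul,
        show ((0:Fin 4):ℕ) = 0 from rfl, show ((1:Fin 4):ℕ) = 1 from rfl,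
        show ((2:Fin 4):ℕ) = 2 from rfl, show ((3:Fin 4):ℕ) = 3 from rfl] using hj
    rw [AdjoinRoot.mk_eq_mk] at hmk
    have hLS : Pq ∣ ((C X + C (C a1) * X + C (C a2) * X ^ 2 + C (C a3) * X ^ 3) * X ^ 3) - (C (-C a1 * C c0 + C a2 * C c0 * C c3 + C a3 * C c0 * C c2 - C a3 * C c0 * C c3 ^ 2) + C (-C a1 * C c1 - C a2 * C c0 + C a2 * C c1 * C c3 + C a3 * C c0 * C c3 + C a3 * C c1 * C c2 - C a3 * C c1 * C c3 ^ 2) * X + C (-C a1 * C c2 - C a2 * C c1 + C a2 * C c2 * C c3 - C a3 * C c0 + C a3 * C c1 * C c3 + C a3 * C c2 ^ 2 - C a3 * C c2 * C c3 ^ 2) * X ^ 2 + C (X - C a1 * C c3 - C a2 * C c2 + C a2 * C c3 ^ 2 - C a3 * C c1 + 2 * C a3 * C c2 * C c3 - C a3 * C c3 ^ 3) * X ^ 3) := by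
      refine ⟨(C (C a1)) - (C (C a2)) * (C (C c3)) + (C (C a2)) * X - (C (C a3)) * (C (C c2)) + (C (C a3)) * (C (C c3)) ^ 2 - (C (C a3)) * (C (C c3)) * X + (C (C a3)) * X ^ 2, ?_⟩
      rw [hPq]
      try simp only [_root_.map_add, _root_.map_sub, _root_.map_mul, _root_.map_neg, _root_.map_pow, _root_.map_one, _root_.map_ofNat, _root_.map_zero]
      ring
    have hdvd : Pq ∣ (C (-C a1 * C c0 + C a2 * C c0 * C c3 + C a3 * C c0 * C c2 - C a3 * C c0 * C c3 ^ 2) + C (-C a1 * C c1 - C a2 * C c0 + C a2 * C c1 * C c3 + C a3 * C c0 * C c3 + C a3 * C c1 * C c2 - C a3 * C c1 * C c3 ^ 2) * X + C (-C a1 * C c2 - C a2 * C c1 + C a2 * C c2 * C c3 - C a3 * C c0 + C a3 * C c1 * C c3 + C a3 * C c2 ^ 2 - C a3 * C c2 * C c3 ^ 2) * X ^ 2 + C (X - C a1 * C c3 - C a2 * C c2 + C a2 * C c3 ^ 2 - C a3 * C c1 + 2 * C a3 * C c2 * C c3 - C a3 * C c3 ^ 3) * X ^ 3) - (C (M 0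 3) + C (M 1 3) * X + C (M 2 3) * X ^ 2 + C (M 3 3) * X ^ 3) := by
      have h2 : (C (-C a1 * C c0 + C a2 * C c0 * C c3 + C a3 * C c0 * C c2 - C a3 * C c0 * C c3 ^ 2) + C (-C a1 * C c1 - C a2 * C c0 + C a2 * C c1 * C c3 + C a3 * C c0 * C c3 + C a3 * C c1 * C c2 - C a3 * C c1 * C c3 ^ 2) * X + C (-C a1 * C c2 - C a2 * C c1 + C a2 * C c2 * C c3 - C a3 * C c0 + C a3 * C c1 * C c3 + C a3 * C c2 ^ 2 - C a3 * C c2 * C c3 ^ 2) * X ^ 2 + C (X - C a1 * C c3 - C a2 * C c2 + C a2 * C c3 ^ 2 - C a3 * C c1 + 2 * C a3 * C c2 * C c3 - C a3 * C c3 ^ 3) * X ^ 3) - (C (M 0 3) + C (M 1 3) * X + C (M 2 3) * X ^ 2 + C (M 3 3) * X ^ 3) = (((C X + C (C a1) * X + C (C a2) * X ^ 2 + C (C a3) * X ^ 3) * X ^ 3) - (C (M 0 3) + C (M 1 3) * X + C (M 2 3) * X ^ 2 + C (M 3 3) * X ^ 3)) - (((C X + C (C a1) * X + C (C a2) * X ^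 2 + C (C a3) * X ^ 3) * X ^ 3) - (C (-C a1 * C c0 + C a2 * C c0 * C c3 + C a3 * C c0 * C c2 - C a3 * C c0 * C c3 ^ 2) + C (-C a1 * C c1 - C a2 * C c0 + C a2 * C c1 * C c3 + C a3 * C c0 * C c3 + C a3 * C c1 * C c2 - C a3 * C c1 * C c3 ^ 2) * X + C (-C a1 * C c2 - C a2 * C c1 + C a2 * C c2 * C c3 - C a3 * C c0 + C a3 * C c1 * C c3 + C a3 * C c2 ^ 2 - C a3 * C c2 * C c3 ^ 2) * X ^ 2 + C (X - C a1 * C c3 - C a2 * C c2 + C a2 * C c3 ^ 2 - C a3 * C c1 + 2 * C a3 * C c2 * C c3 - C a3 * C c3 ^ 3) * X ^ 3)) := by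
        ring
      rw [h2]; exact dvd_sub hmk hLS
    have hz : (C (-C a1 * C c0 + C a2 * C c0 * C c3 + C a3 * C c0 * C c2 - C a3 * C c0 * C c3 ^ 2) + C (-C a1 * C c1 - C a2 * C c0 + C a2 * C c1 * C c3 + C a3 * C c0 * C c3 + C a3 * C c1 * C c2 - C a3 * C c1 * C c3 ^ 2) * X + C (-C a1 * C c2 - C a2 * C c1 + C a2 * C c2 * C c3 - C a3 * C c0 + C a3 * C c1 * C c3 + C a3 * C c2 ^ 2 - C a3 * C c2 * C c3 ^ 2) * X ^ 2 + C (X - C a1 * C c3 - C a2 * C c2 + C a2 * C c3 ^ 2 - C a3 * C c1 + 2 * C a3 * C c2 * C c3 - C a3 * C c3 ^ 3) * X ^ 3) - (C (M 0 3) + C (M 1 3) * X + C (M 2 3) * X ^ 2 + C (M 3 3) * X ^ 3) = 0 := by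
      refine Polynomial.eq_zero_of_dvd_of_degree_lt hdvd ?_
      rw [hPdeg]
      have hle : ((C (-C a1 * C c0 + C a2 * C c0 * C c3 + C a3 * C c0 * C c2 - C a3 * C c0 * C c3 ^ 2) + C (-C a1 * C c1 - C a2 * C c0 + C a2 * C c1 * C c3 + C a3 * C c0 * C c3 + C a3 * C c1 * C c2 - C a3 * C c1 * C c3 ^ 2) * X + C (-C a1 * C c2 - C a2 * C c1 + C a2 * C c2 * C c3 - C a3 * C c0 + C a3 * C c1 * C c3 + C a3 * C c2 ^ 2 - C a3 * C c2 * C c3 ^ 2) * X ^ 2 + C (X - C a1 * C c3 - C a2 * C c2 + C a2 * C c3 ^ 2 - C a3 * C c1 + 2 * C a3 * C c2 * C c3 - C a3 * C c3 ^ 3) * X ^ 3) - (C (M 0 3) + C (M 1 3) * X + C (M 2 3) * X ^ 2 + C (M 3 3) * X ^ 3)).degree ≤ 3 := by compute_degree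
      exact lt_of_le_of_lt hle (by decide)
    exact sub_eq_zero.mp hz
  have hm03 : (-C a1 * C c0 + C a2 * C c0 * C c3 + C a3 * C c0 * C c2 - C a3 * C c0 * C c3 ^ 2) = M 0 3 := by
    have hc := congrArg (fun p => Polynomial.coeff p 0) hSR3
    simp only [Polynomial.coeff_add, Polynomial.coeff_C, Polynomial.coeff_C_mul,
      Polynomial.coeff_X_pow, Polynomial.coeff_X_zero, Polynomial.coeff_X_one,
      Polynomial.coeff_X] at hc
    norm_num at hc
    linear_combination hc
  have hm13 : (-C a1 * C c1 - C a2 * C c0 + C a2 * C c1 * C c3 + C a3 * C c0 * C c3 + C a3 * C c1 * C c2 - C a3 * C c1 * C c3 ^ 2) = M 1 3 := by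
    have hc := congrArg (fun p => Polynomial.coeff p 1) hSR3
    simp only [Polynomial.coeff_add, Polynomial.coeff_C, Polynomial.coeff_C_mul,
      Polynomial.coeff_X_pow, Polynomial.coeff_X_zero, Polynomial.coeff_X_one,
      Polynomial.coeff_X] at hc
    norm_num at hc
    linear_combination hc
  have hm23 : (-C a1 * C c2 - C a2 * C c1 + C a2 * C c2 * C c3 - C a3 * C c0 + C a3 * C c1 * C c3 + C a3 * C c2 ^ 2 - C a3 * C c2 * C c3 ^ 2) = M 2 3 := by
    have hc := congrArg (fun p => Polynomial.coeff p 2) hSR3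
    simp only [Polynomial.coeff_add, Polynomial.coeff_C, Polynomial.coeff_C_mul,
      Polynomial.coeff_X_pow, Polynomial.coeff_X_zero, Polynomial.coeff_X_one,
      Polynomial.coeff_X] at hc
    norm_num at hc
    linear_combination hc
  have hm33 : (X - C a1 * C c3 - C a2 * C c2 + C a2 * C c3 ^ 2 - C a3 * C c1 + 2 * C a3 * C c2 * C c3 - C a3 * C c3 ^ 3) = M 3 3 := by
    have hc := congrArg (fun p => Polynomial.coeff p 3) hSR3
    simp only [Polynomial.coeff_add, Polynomial.coeff_C, Polynomial.coeff_C_mul,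
      Polynomial.coeff_X_pow, Polynomial.coeff_X_zero, Polynomial.coeff_X_one,
      Polynomial.coeff_X] at hc
    norm_num at hc
    linear_combination hc
  have hB13 : M.adjugate 2 0 = C (-a1 ^ 3 * c3 + a1 ^ 2 * a2 * c3 ^ 2 + 2 * a1 ^ 2 * a3 * c2 * c3 - a1 ^ 2 * a3 * c3 ^ 3 - a1 * a2 ^ 2 * c2 * c3 + 2 * a1 * a2 * a3 * c0 - 3 * a1 * a2 * a3 * c1 * c3 + a1 * a2 * a3 * c2 * c3 ^ 2 - 2 * a1 * a3 ^ 2 * c0 * c3 + 2 * a1 * a3 ^ 2 * c1 * c3 ^ 2 - a1 * a3 ^ 2 * c2 ^ 2 * c3 - a2 ^ 3 * c0 + a2 ^ 3 * c1 * c3 + 2 * a2 ^ 2 * a3 * c0 * c3 - a2 ^ 2 * a3 * c1 * c3 ^ 2 - a2 * a3 ^ 2 * c0 * c2 - a2 * a3 ^ 2 * c0 * c3 ^ 2 + a2 * a3 ^ 2 * c1 * c2 * c3 + a3 ^ 3 * c0 * c1 + a3 ^ 3 * c0 * c2 * c3 - a3 ^ 3 * c1 ^ 2 * c3) + C (a1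 ^ 2 + a1 * a2 * c3 - 2 * a1 * a3 * c2 + a2 ^ 2 * c2 - a2 ^ 2 * c3 ^ 2 + a2 * a3 * c1 - a2 * a3 * c2 * c3 + a2 * a3 * c3 ^ 3 - a3 ^ 2 * c0 + a3 ^ 2 * c1 * c3 + a3 ^ 2 * c2 ^ 2 - a3 ^ 2 * c2 * c3 ^ 2) * X + C (-a2) * X ^ 2 := by
    rw [Matrix.adjugate_fin_succ_eq_det_submatrix, Matrix.det_fin_three]
    simp only [Matrix.submatrix_apply, show ((0:Fin 4).succAbove 0) = 1 from rfl, show ((0:Fin 4).succAbove 1) = 2 from rfl,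
      show ((0:Fin 4).succAbove 2) = 3 from rfl, show ((2:Fin 4).succAbove 0) = 0 from rfl,
      show ((2:Fin 4).succAbove 1) = 1 from rfl, show ((2:Fin 4).succAbove 2) = 3 from rfl,
      show ((3:Fin 4).succAbove 0) = 0 from rfl, show ((3:Fin 4).succAbove 1) = 1 from rfl,
      show ((3:Fin 4).succAbove 2) = 2 from rfl, show ((0:Fin 4):ℕ) = 0 from rfl,
      show ((2:Fin 4):ℕ) = 2 from rfl, show ((3:Fin 4):ℕ) = 3 from rfl]
    simp only [← hm00, ← hm10, ← hm20, ← hm30, ← hm01, ← hm11, ← hm21, ← hm31, ← hm02, ← hm12, ← hm22, ← hm32, ← hm03, ← hm13, ← hm23, ← hm33]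
    try simp only [_root_.map_add, _root_.map_sub, _root_.map_mul, _root_.map_neg, _root_.map_pow, _root_.map_one, _root_.map_ofNat, _root_.map_zero]
    ring
  have hB14 : M.adjugate 3 0 = C (-a1 ^ 3 + a1 ^ 2 * a2 * c3 + 2 * a1 ^ 2 * a3 * c2 - a1 ^ 2 * a3 * c3 ^ 2 - a1 * a2 ^ 2 * c2 - 3 * a1 * a2 * a3 * c1 + a1 * a2 * a3 * c2 * c3 - a1 * a3 ^ 2 * c0 + 2 * a1 * a3 ^ 2 * c1 * c3 - a1 * a3 ^ 2 * c2 ^ 2 + a2 ^ 3 * c1 + a2 ^ 2 * a3 * c0 - a2 ^ 2 * a3 * c1 * c3 - a2 * a3 ^ 2 * c0 * c3 + a2 * a3 ^ 2 * c1 * c2 + a3 ^ 3 * c0 * c2 - a3 ^ 3 * c1 ^ 2) + C (2 * a1 * a2 - a1 * a3 * c3 - a2 ^ 2 * c3 + a2 * a3 * c3 ^ 2 + 2 * a3 ^ 2 * c1 - a3 ^ 2 * c2 * c3) * X + C (-a3) * X ^ 2 := by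
    rw [Matrix.adjugate_fin_succ_eq_det_submatrix, Matrix.det_fin_three]
    simp only [Matrix.submatrix_apply, show ((0:Fin 4).succAbove 0) = 1 from rfl, show ((0:Fin 4).succAbove 1) = 2 from rfl,
      show ((0:Fin 4).succAbove 2) = 3 from rfl, show ((2:Fin 4).succAbove 0) = 0 from rfl,
      show ((2:Fin 4).succAbove 1) = 1 from rfl, show ((2:Fin 4).succAbove 2) = 3 from rfl,
      show ((3:Fin 4).succAbove 0) = 0 from rfl, show ((3:Fin 4).succAbove 1) = 1 from rfl,
      show ((3:Fin 4).succAbove 2) = 2 from rfl, show ((0:Fin 4):ℕ) = 0 from rfl,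
      show ((2:Fin 4):ℕ) = 2 from rfl, show ((3:Fin 4):ℕ) = 3 from rfl]
    simp only [← hm00, ← hm10, ← hm20, ← hm30, ← hm01, ← hm11, ← hm21, ← hm31, ← hm02, ← hm12, ← hm22, ← hm32, ← hm03, ← hm13, ← hm23, ← hm33]
    try simp only [_root_.map_add, _root_.map_sub, _root_.map_mul, _root_.map_neg, _root_.map_pow, _root_.map_one, _root_.map_ofNat, _root_.map_zero]
    ring
  have hN : M.det = C (a1 ^ 4 * c0 - a1 ^ 3 * a2 * c0 * c3 - 2 * a1 ^ 3 * a3 * c0 * c2 + a1 ^ 3 * a3 * c0 * c3 ^ 2 + a1 ^ 2 * a2 ^ 2 * c0 * c2 + 3 * a1 ^ 2 * a2 * a3 * c0 * c1 - a1 ^ 2 * a2 * a3 * c0 * c2 * c3 + 2 * a1 ^ 2 * a3 ^ 2 * c0 ^ 2 - 2 * a1 ^ 2 * a3 ^ 2 * c0 * c1 * c3 + a1 ^ 2 * a3 ^ 2 * c0 * c2 ^ 2 - a1 * a2 ^ 3 * c0 * c1 - 4 * a1 * a2 ^ 2 * a3 * c0 ^ 2 + a1 * a2 ^ 2 * a3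 * c0 * c1 * c3 + 3 * a1 * a2 * a3 ^ 2 * c0 ^ 2 * c3 - a1 * a2 * a3 ^ 2 * c0 * c1 * c2 - 2 * a1 * a3 ^ 3 * c0 ^ 2 * c2 + a1 * a3 ^ 3 * c0 * c1 ^ 2 + a2 ^ 4 * c0 ^ 2 - a2 ^ 3 * a3 * c0 ^ 2 * c3 + a2 ^ 2 * a3 ^ 2 * c0 ^ 2 * c2 - a2 * a3 ^ 3 * c0 ^ 2 * c1 + a3 ^ 4 * c0 ^ 3) + C (-a1 ^ 3 * c1 - 4 * a1 ^ 2 * a2 * c0 + a1 ^ 2 * a2 * c1 * c3 + a1 ^ 2 * a3 * c0 * c3 + 2 * a1 ^ 2 * a3 * c1 * c2 - a1 ^ 2 * a3 * c1 * c3 ^ 2 + 3 * a1 * a2 ^ 2 * c0 * c3 - a1 * a2 ^ 2 * c1 * c2 + 4 * a1 * a2 * a3 * c0 * c2 - 3 * a1 * a2 * a3 * c0 * c3 ^ 2 - 3 * a1 * a2 * a3 * c1 ^ 2 + a1 * a2 * a3 * c1 * c2 * c3 - 5 * a1 * a3 ^ 2 * c0 * c1 + a1 * a3 ^ 2 * c0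 * c2 * c3 + 2 * a1 * a3 ^ 2 * c1 ^ 2 * c3 - a1 * a3 ^ 2 * c1 * c2 ^ 2 - 2 * a2 ^ 3 * c0 * c2 + a2 ^ 3 * c1 ^ 2 + a2 ^ 2 * a3 * c0 * c1 + 2 * a2 ^ 2 * a3 * c0 * c2 * c3 - a2 ^ 2 * a3 * c1 ^ 2 * c3 + 4 * a2 * a3 ^ 2 * c0 ^ 2 - a2 * a3 ^ 2 * c0 * c1 * c3 - 2 * a2 * a3 ^ 2 * c0 * c2 ^ 2 + a2 * a3 ^ 2 * c1 ^ 2 * c2 - 3 * a3 ^ 3 * c0 ^ 2 * c3 + 3 * a3 ^ 3 * c0 * c1 * c2 - a3 ^ 3 * c1 ^ 3) * X + C (a1 ^ 2 * c2 + 3 * a1 * a2 * c1 - a1 * a2 * c2 * c3 + 4 * a1 * a3 * c0 - a1 * a3 * c1 * c3 - 2 * a1 * a3 * c2 ^ 2 + a1 * a3 * c2 * c3 ^ 2 + 2 * a2 ^ 2 * c0 - 2 * a2 ^ 2 * c1 * c3 + a2 ^ 2 * c2 ^ 2 - 5 * a2 * a3 * c0 * c3 + a2 * a3 * c1 * c2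 + 2 * a2 * a3 * c1 * c3 ^ 2 - a2 * a3 * c2 ^ 2 * c3 - 3 * a3 ^ 2 * c0 * c2 + 3 * a3 ^ 2 * c0 * c3 ^ 2 + 3 * a3 ^ 2 * c1 ^ 2 - 3 * a3 ^ 2 * c1 * c2 * c3 + a3 ^ 2 * c2 ^ 3) * X ^ 2 + C (-a1 * c3 - 2 * a2 * c2 + a2 * c3 ^ 2 - 3 * a3 * c1 + 3 * a3 * c2 * c3 - a3 * c3 ^ 3) * X ^ 3 + X ^ 4 := by
    rw [det_fin_4 M]
    simp only [← hm00, ← hm10, ← hm20, ← hm30, ← hm01, ← hm11, ← hm21, ← hm31, ← hm02, ← hm12, ← hm22, ← hm32, ← hm03, ← hm13, ← hm23, ← hm33]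
    try simp only [_root_.map_add, _root_.map_sub, _root_.map_mul, _root_.map_neg, _root_.map_pow, _root_.map_one, _root_.map_ofNat, _root_.map_zero]
    ring
  unfold sylvResultant22 sylvResultant24
  rw [hB13, hB14, hN]
  simp only [Polynomial.coeff_add, Polynomial.coeff_C, Polynomial.coeff_C_mul,
    Polynomial.coeff_X_pow, Polynomial.coeff_X_zero, Polynomial.coeff_X_one,
    Polynomial.coeff_X]
  norm_num
  exact key _ _ _ _ _ _ (-a1 ^ 3 * c3 ^ 2 + a1 ^ 2 * a2 * c3 ^ 3 - a1 ^ 2 * a3 * c0 + 2 * a1 ^ 2 * a3 * c2 * c3 ^ 2 - a1 ^ 2 * a3 * c3 ^ 4 + a1 * a2 ^ 2 * c0 - a1 * a2 ^ 2 * c2 * c3 ^ 2 + 3 * a1 * a2 * a3 * c0 * c3 - 3 * a1 * a2 * a3 * c1 * c3 ^ 2 + a1 * a2 * a3 * c2 * c3 ^ 3 + a1 * a3 ^ 2 * c0 * c2 - 3 * a1 * a3 ^ 2 * c0 * c3 ^ 2 + 2 * a1 * a3 ^ 2 * c1 * c3 ^ 3 - a1 * a3 ^ 2 * c2 ^ 2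 * c3 ^ 2 - 2 * a2 ^ 3 * c0 * c3 + a2 ^ 3 * c1 * c3 ^ 2 + 3 * a2 ^ 2 * a3 * c0 * c3 ^ 2 - a2 ^ 2 * a3 * c1 * c3 ^ 3 - 2 * a2 * a3 ^ 2 * c0 * c2 * c3 - a2 * a3 ^ 2 * c0 * c3 ^ 3 + a2 * a3 ^ 2 * c1 * c2 * c3 ^ 2 - a3 ^ 3 * c0 ^ 2 + 2 * a3 ^ 3 * c0 * c1 * c3 + a3 ^ 3 * c0 * c2 * c3 ^ 2 - a3 ^ 3 * c1 ^ 2 * c3 ^ 2) (2 * a1 ^ 2 * c3 + a1 * a3 * c1 - 4 * a1 * a3 * c2 * c3 + a1 * a3 * c3 ^ 3 - a2 ^ 2 * c1 + 2 * a2 ^ 2 * c2 * c3 - a2 ^ 2 * c3 ^ 3 - 2 * a2 * a3 * c0 + 3 * a2 * a3 * c1 * c3 - 2 * a2 * a3 * c2 * c3 ^ 2 + a2 * a3 * c3 ^ 4 - a3 ^ 2 * c1 * c2 + 2 * a3 ^ 2 * c2 ^ 2 * c3 - a3 ^ 2 * c2 * c3 ^ 3) (-a1 - a2 * c3 + a3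 * c2) _ _ _ _ _ _
    (by ring) (by ring) (by ring) (by ring) (by ring)
end

section
/- Let P ∈ ℤ[X] be an irreducible monic quartic with Galois group C4 or D4 and roots r1, r2, r3, r4 ordered with r1 r2 + r3 r4 ∈ ℚ. Define q1 = ∏ over (i,j) ∈ {(1,3),(1,4),(2,3),(2,4)} of (a(r_i) - a(r_j))/(r_i - r_j) and q2 = ((a(r1)-a(r2))/(r1-r2)) · ((a(r3)-a(r4))/(r3-r4)), where a(r) = a0 + a1 r + a2 r^2 + a3 r^3. Then q1 and q2 are polynomials in a1, a2, a3 with rational coefficients (i.e. they are Galois-invariant and independent of a0). -/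
open Polynomial

/-- `a(r) = a0 + a1 r + a2 r^2 + a3 r^3` with rational coefficients, evaluated in a
`ℚ`-algebra. -/
noncomputable def cubicEvalQ {L : Type*} [Field L] [Algebra ℚ L]
    (a0 a1 a2 a3 : ℚ) (r : L) : L :=
  algebraMap ℚ L a0 + algebraMap ℚ L a1 * r + algebraMap ℚ L a2 * r ^ 2
    + algebraMap ℚ L a3 * r ^ 3

set_option maxHeartbeats 3200000 in
/-- Let `P ∈ ℤ[X]` be an irreducible monic quartic with Galois group
`C4` or `D4` and roots `r1, r2, r3, r4` ordered with `r1 r2 + r3 r4 ∈ ℚ`.  With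
`q1 = ∏_{(i,j) ∈ {(1,3),(1,4),(2,3),(2,4)}} (a(r_i) - a(r_j))/(r_i - r_j)` and
`q2 = ((a(r1)-a(r2))/(r1-r2)) ⬝ ((a(r3)-a(r4))/(r3-r4))`, the values `q1` and `q2`
are rational for all rational `a0, a1, a2, a3` (they are polynomials in `a1, a2, a3`
with rational coefficients). -/
theorem quartic_C4_D4_q1_q2_rational (P : ℤ[X]) (hmonic : P.Monic)
    (hdeg : P.natDegree = 4) (hirr : Irreducible P)
    (hGal : Nonempty ((P.map (Int.castRingHom ℚ)).Gal ≃* Multiplicative (ZMod 4)) ∨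
            Nonempty ((P.map (Int.castRingHom ℚ)).Gal ≃* DihedralGroup 4))
    (r1 r2 r3 r4 : (P.map (Int.castRingHom ℚ)).SplittingField)
    (hroots : ((P.map (Int.castRingHom ℚ)).map
        (algebraMap ℚ (P.map (Int.castRingHom ℚ)).SplittingField)).roots
        = {r1, r2, r3, r4})
    (hdist : r1 ≠ r2 ∧ r1 ≠ r3 ∧ r1 ≠ r4 ∧ r2 ≠ r3 ∧ r2 ≠ r4 ∧ r3 ≠ r4)
    (hrat : ∃ q : ℚ, r1 * r2 + r3 * r4
        = algebraMap ℚ (P.map (Int.castRingHom ℚ)).SplittingField q) :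
    ∀ a0 a1 a2 a3 : ℚ,
      ((cubicEvalQ a0 a1 a2 a3 r1 - cubicEvalQ a0 a1 a2 a3 r3) / (r1 - r3)
          * ((cubicEvalQ a0 a1 a2 a3 r1 - cubicEvalQ a0 a1 a2 a3 r4) / (r1 - r4))
          * ((cubicEvalQ a0 a1 a2 a3 r2 - cubicEvalQ a0 a1 a2 a3 r3) / (r2 - r3))
          * ((cubicEvalQ a0 a1 a2 a3 r2 - cubicEvalQ a0 a1 a2 a3 r4) / (r2 - r4)))
        ∈ Set.range (algebraMap ℚ (P.map (Int.castRingHom ℚ)).SplittingField) ∧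
      ((cubicEvalQ a0 a1 a2 a3 r1 - cubicEvalQ a0 a1 a2 a3 r2) / (r1 - r2)
          * ((cubicEvalQ a0 a1 a2 a3 r3 - cubicEvalQ a0 a1 a2 a3 r4) / (r3 - r4)))
        ∈ Set.range (algebraMap ℚ (P.map (Int.castRingHom ℚ)).SplittingField) := by
  obtain ⟨h12, h13, h14, h23, h24, h34⟩ := hdist
  intro a0 a1 a2 a3
  let L := (P.map (Int.castRingHom ℚ)).SplittingField
  let p : ℚ[X] := P.map (Int.castRingHom ℚ)
  -- the mapped polynomial factors through the roots
  have hml : (p.map (algebraMap ℚ L)).Monic := (hmonic.map _).map _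
  have heq : p.map (algebraMap ℚ L)
      = (X - C r1) * ((X - C r2) * ((X - C r3) * (X - C r4))) := by
    have h : (P.map (Int.castRingHom ℚ)).map
        (algebraMap ℚ (P.map (Int.castRingHom ℚ)).SplittingField)
        = ((((P.map (Int.castRingHom ℚ)).map
        (algebraMap ℚ (P.map (Int.castRingHom ℚ)).SplittingField)).roots).map
          (fun x => X - C x)).prod := Splits.eq_prod_roots_of_monic
      (SplittingField.splits p) hml
    rw [hroots] at h
    simp only [Multiset.insert_eq_cons, Multiset.map_cons, Multiset.map_singleton,
      Multiset.prod_cons, Multiset.prod_singleton] at h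
    exact h
  have hexp : p.map (algebraMap ℚ L)
      = X ^ 4 - C (r1 + r2 + r3 + r4) * X ^ 3
        + C (r1*r2 + r1*r3 + r1*r4 + r2*r3 + r2*r4 + r3*r4) * X ^ 2
        - C (r1*r2*r3 + r1*r2*r4 + r1*r3*r4 + r2*r3*r4) * X
        + C (r1*r2*r3*r4) := by
    rw [heq]; ring_nf; simp only [C_add, C_mul]; ring
  have h3 := congrArg (fun q : L[X] => q.coeff 3) hexp
  have h2 := congrArg (fun q : L[X] => q.coeff 2) hexp
  have h1 := congrArg (fun q : L[X] => q.coeff 1) hexp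
  have h0 := congrArg (fun q : L[X] => q.coeff 0) hexp
  simp only [coeff_map, coeff_add, coeff_sub, coeff_C_mul, coeff_X_pow, coeff_X,
    coeff_C] at h3 h2 h1 h0
  norm_num at h3 h2 h1 h0
  obtain ⟨b1, hb1⟩ : ∃ b : ℚ, r1 + r2 + r3 + r4 = algebraMap ℚ L b :=
    ⟨-(p.coeff 3), by rw [eq_ratCast]; push_cast; linear_combination h3⟩
  obtain ⟨b2, hb2⟩ : ∃ b : ℚ,
      r1*r2 + r1*r3 + r1*r4 + r2*r3 + r2*r4 + r3*r4 = algebraMap ℚ L b :=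
    ⟨p.coeff 2, by rw [eq_ratCast]; push_cast; linear_combination -h2⟩
  obtain ⟨b3, hb3⟩ : ∃ b : ℚ,
      r1*r2*r3 + r1*r2*r4 + r1*r3*r4 + r2*r3*r4 = algebraMap ℚ L b :=
    ⟨-(p.coeff 1), by rw [eq_ratCast]; push_cast; linear_combination h1⟩
  obtain ⟨b4, hb4⟩ : ∃ b : ℚ, r1*r2*r3*r4 = algebraMap ℚ L b :=
    ⟨p.coeff 0, by rw [eq_ratCast]; push_cast; linear_combination -h0⟩
  obtain ⟨t, ht⟩ := hrat
  -- each difference quotient is a polynomial in the two roots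
  have hf : ∀ x y : L, x ≠ y →
      (cubicEvalQ a0 a1 a2 a3 x - cubicEvalQ a0 a1 a2 a3 y) / (x - y)
      = algebraMap ℚ L a1 + algebraMap ℚ L a2 * (x + y)
        + algebraMap ℚ L a3 * (x ^ 2 + x * y + y ^ 2) := by
    intro x y hxy
    rw [div_eq_iff (sub_ne_zero.mpr hxy)]
    simp only [cubicEvalQ]
    ring
  constructor
  · refine ⟨a3^4*b4^2 + a3^4*b2*b4*t + a3^4*b2^2*t^2 - 3*a3^4*b2^2*b4 - 2*a3^4*b1*b3*b4
      - a3^4*b1*b2*b3*t + a3^4*b1^2*b3^2 - 2*a2*a3^3*b3*b4 - a2*a3^3*b2*b3*t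
      - a2*a3^3*b2^2*b3 + a2*a3^3*b1*b4*t + 2*a2*a3^3*b1*b3^2 + 2*a2*a3^3*b1*b2*t^2
      - 7*a2*a3^3*b1*b2*b4 - a2*a3^3*b1^2*b3*t + a2*a3^3*b1^2*b2*b3 - 4*a2^2*a3^2*t^3
      + 17*a2^2*a3^2*b4*t + 5*a2^2*a3^2*b3^2 + 6*a2^2*a3^2*b2*t^2 - 23*a2^2*a3^2*b2*b4
      - 6*a2^2*a3^2*b1*b3*t + a2^2*a3^2*b1^2*t^2 + a2^2*a3^2*b1^3*b3 - a2^3*a3*b3*t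
      - a2^3*a3*b2*b3 + 2*a2^3*a3*b1*t^2 - 8*a2^3*a3*b1*b4 + 2*a2^3*a3*b1^2*b3
      + a2^4*t^2 - 4*a2^4*b4 + a2^4*b1*b3 + 2*a1*a3^3*t^3 - 9*a1*a3^3*b4*t
      - 2*a1*a3^3*b3^2 - 4*a1*a3^3*b2*t^2 + 13*a1*a3^3*b2*b4 - a1*a3^3*b2^2*t
      - a1*a3^3*b2^3 + 3*a1*a3^3*b1*b3*t + a1*a3^3*b1*b2*b3 + a1*a3^3*b1^2*b2*t
      + a1*a3^3*b1^2*b2^2 - 2*a1*a3^3*b1^3*b3 + a1*a2*a3^2*b3*t + 3*a1*a2*a3^2*b2*b3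
      - 2*a1*a2*a3^2*b1*t^2 + 10*a1*a2*a3^2*b1*b4 - 6*a1*a2*a3^2*b1^2*b3
      + a1*a2*a3^2*b1^3*t + a1*a2*a3^2*b1^3*b2 - 2*a1*a2^2*a3*t^2 + 8*a1*a2^2*a3*b4
      - a1*a2^2*a3*b2*t - a1*a2^2*a3*b2^2 - 4*a1*a2^2*a3*b1*b3 + 2*a1*a2^2*a3*b1^2*t
      + 2*a1*a2^2*a3*b1^2*b2 + a1*a2^3*b1*t + a1*a2^3*b1*b2 + a1^2*a3^2*t^2
      - 2*a1^2*a3^2*b4 + 2*a1^2*a3^2*b2*t + 3*a1^2*a3^2*b2^2 - a1^2*a3^2*b1*b3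
      - a1^2*a3^2*b1^2*t - 3*a1^2*a3^2*b1^2*b2 + a1^2*a3^2*b1^4 - 2*a1^2*a2*a3*b3
      - 2*a1^2*a2*a3*b1*b2 + 2*a1^2*a2*a3*b1^3 + a1^2*a2^2*t + a1^2*a2^2*b2
      + a1^2*a2^2*b1^2 - a1^3*a3*t - 3*a1^3*a3*b2 + 2*a1^3*a3*b1^2 + 2*a1^3*a2*b1
      + a1^4, ?_⟩
    rw [hf r1 r3 h13, hf r1 r4 h14, hf r2 r3 h23, hf r2 r4 h24]
    simp only [map_add, map_sub, map_mul, map_pow, map_neg, map_ofNat, map_one]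
    rw [← hb1, ← hb2, ← hb3, ← hb4, ← ht]
    ring
  · refine ⟨a3^2*b4 - a3^2*b2*t + a3^2*b2^2 - a3^2*b1*b3 - a2*a3*b3 - a2*a3*b1*t
      + a2*a3*b1*b2 - a2^2*t + a2^2*b2 + a1*a3*t - 2*a1*a3*b2 + a1*a3*b1^2
      + a1*a2*b1 + a1^2, ?_⟩
    rw [hf r1 r2 h12, hf r3 r4 h34]
    simp only [map_add, map_sub, map_mul, map_pow, map_neg, map_ofNat, map_one]
    rw [← hb1, ← hb2, ← hb3, ← hb4, ← ht]
    ring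
end

section
/- Let P ∈ ℤ[X] be an irreducible monic quartic with Galois group C4, generated by σ = (r1 r3 r2 r4), roots ordered with r1 r2 + r3 r4 ∈ ℚ, and set K = ℚ(r1 + r3). Then the quartic form q1(a1,a2,a3) = ∏_{(i,j)∈{(1,3),(1,4),(2,3),(2,4)}} (a1 + a2(r_i+r_j) + a3(r_i^2+r_i r_j+r_j^2)) equals N_{K/ℚ}(a1 + a2(r1+r3) + a3(r1^2 + r1 r3 + r3^2)) for all a1, a2, a3 ∈ ℚ. -/
open Polynomial

theorem myFixedField_bot {F E : Type*} [Field F] [Field E] [Algebra F E] :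
    IntermediateField.fixedField (⊥ : Subgroup (E ≃ₐ[F] E)) = ⊤ := by
  rw [eq_top_iff]
  rintro x -
  rintro ⟨g, hg⟩
  rw [Subgroup.mem_bot] at hg
  subst hg
  rfl

/-- Let `P ∈ ℤ[X]` be an irreducible monic quartic with cyclic Galois
group `C4` generated by `σ = (r1 r3 r2 r4)`, roots ordered with `r1 r2 + r3 r4 ∈ ℚ`.
Then `K := ℚ(r1 + r3)` is the whole splitting field, and the quartic form
`q1(a1,a2,a3) = ∏_{(i,j)∈{(1,3),(1,4),(2,3),(2,4)}} (a1 + a2(r_i+r_j) + a3(r_i^2+r_i r_j+r_j^2))`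
equals `N_{K/ℚ}(a1 + a2(r1+r3) + a3(r1^2 + r1 r3 + r3^2))` for all `a1, a2, a3 ∈ ℚ`. -/
theorem quartic_C4_q1_is_norm (P : ℤ[X]) (hmonic : P.Monic)
    (hdeg : P.natDegree = 4) (hirr : Irreducible P)
    (r1 r2 r3 r4 : (P.map (Int.castRingHom ℚ)).SplittingField)
    (hroots : ((P.map (Int.castRingHom ℚ)).map
        (algebraMap ℚ (P.map (Int.castRingHom ℚ)).SplittingField)).roots
        = {r1, r2, r3, r4})
    (σ : (P.map (Int.castRingHom ℚ)).Gal)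
    (hgen : ∀ τ : (P.map (Int.castRingHom ℚ)).Gal, τ ∈ Subgroup.zpowers σ)
    (h13 : σ r1 = r3) (h32 : σ r3 = r2) (h24 : σ r2 = r4) (h41 : σ r4 = r1)
    (hrat : ∃ q : ℚ, r1 * r2 + r3 * r4
        = algebraMap ℚ (P.map (Int.castRingHom ℚ)).SplittingField q) :
    IntermediateField.adjoin ℚ {r1 + r3} = ⊤ ∧
    ∀ a1 a2 a3 : ℚ,
      (algebraMap ℚ _ a1 + algebraMap ℚ _ a2 * (r1 + r3)
          + algebraMap ℚ _ a3 * (r1 ^ 2 + r1 * r3 + r3 ^ 2))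
        * (algebraMap ℚ _ a1 + algebraMap ℚ _ a2 * (r1 + r4)
          + algebraMap ℚ _ a3 * (r1 ^ 2 + r1 * r4 + r4 ^ 2))
        * (algebraMap ℚ _ a1 + algebraMap ℚ _ a2 * (r2 + r3)
          + algebraMap ℚ _ a3 * (r2 ^ 2 + r2 * r3 + r3 ^ 2))
        * (algebraMap ℚ _ a1 + algebraMap ℚ _ a2 * (r2 + r4)
          + algebraMap ℚ _ a3 * (r2 ^ 2 + r2 * r4 + r4 ^ 2))
      = algebraMap ℚ (P.map (Int.castRingHom ℚ)).SplittingField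
          (Algebra.norm ℚ
            (algebraMap ℚ (P.map (Int.castRingHom ℚ)).SplittingField a1
              + algebraMap ℚ _ a2 * (r1 + r3)
              + algebraMap ℚ _ a3 * (r1 ^ 2 + r1 * r3 + r3 ^ 2))) := by
  classical
  -- irreducibility and separability over ℚ
  have hQirr : Irreducible (P.map (Int.castRingHom ℚ)) :=
    (Polynomial.IsPrimitive.Int.irreducible_iff_irreducible_map_cast hmonic.isPrimitive).mp hirr
  have hsep : (P.map (Int.castRingHom ℚ)).Separable := hQirr.separable
  have hnodup : (((P.map (Int.castRingHom ℚ)).map (algebraMap ℚ (P.map (Int.castRingHom ℚ)).SplittingField)).roots).Nodup :=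
    Polynomial.nodup_roots hsep.map
  rw [hroots] at hnodup
  simp only [Multiset.insert_eq_cons, Multiset.nodup_cons, Multiset.mem_cons,
    Multiset.mem_singleton, Multiset.nodup_singleton] at hnodup
  obtain ⟨h1, h2, h3, -⟩ := hnodup
  push_neg at h1 h2
  obtain ⟨h12, h13', h14⟩ := h1
  obtain ⟨h23, h24'⟩ := h2
  have h34 : r3 ≠ r4 := h3
  -- helpers for powers of σ
  have hsq : ∀ y : (P.map (Int.castRingHom ℚ)).SplittingField, (σ ^ 2) y = σ (σ y) := fun y => by
    rw [pow_succ, pow_one]; rfl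
  have hcube : ∀ y : (P.map (Int.castRingHom ℚ)).SplittingField, (σ ^ 3) y = σ (σ (σ y)) := fun y => by
    rw [pow_succ, pow_succ, pow_one]; rfl
  have hquad : ∀ y : (P.map (Int.castRingHom ℚ)).SplittingField, (σ ^ 4) y = σ (σ (σ (σ y))) := fun y => by
    rw [pow_succ, pow_succ, pow_succ, pow_one]; rfl
  -- σ ^ 4 = 1
  have hσ4 : σ ^ 4 = 1 := by
    apply Polynomial.Gal.ext
    intro x hx
    have hx' : x ∈ ({r1, r2, r3, r4} : Multiset (P.map (Int.castRingHom ℚ)).SplittingField) := by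
      rw [Polynomial.rootSet_def, Polynomial.aroots_def] at hx
      erw [hroots] at hx
      rwa [Finset.mem_coe,
        Multiset.mem_toFinset] at hx
    simp only [Multiset.insert_eq_cons, Multiset.mem_cons, Multiset.mem_singleton] at hx'
    have hone : ∀ y : (P.map (Int.castRingHom ℚ)).SplittingField,
        (1 : (P.map (Int.castRingHom ℚ)).Gal) y = y := fun _ => rfl
    rcases hx' with rfl | rfl | rfl | rfl <;>
      simp only [hquad, hone, h13, h32, h24, h41]
  have hσne1 : σ ≠ 1 := by
    intro h
    apply h13'
    rw [← h13, h]
    rfl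
  have hσ2ne1 : σ ^ 2 ≠ 1 := by
    intro h
    apply h12
    have := hsq r1
    rw [h, h13, h32] at this
    exact this
  have horder : orderOf σ = 4 := by
    have hd : orderOf σ ∣ 4 := orderOf_dvd_of_pow_eq_one hσ4
    have hle : orderOf σ ≤ 4 := Nat.le_of_dvd (by norm_num) hd
    have hne0 : orderOf σ ≠ 0 := by intro h; rw [h] at hd; norm_num at hd
    have hne1 : orderOf σ ≠ 1 := fun h => hσne1 (orderOf_eq_one_iff.mp h)
    have hne2 : orderOf σ ≠ 2 := fun h => hσ2ne1 (h ▸ pow_orderOf_eq_one σ)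
    have hne3 : orderOf σ ≠ 3 := by intro h; rw [h] at hd; norm_num at hd
    omega
  -- every element is a power σ^m with m < 4
  have hform : ∀ τ : (P.map (Int.castRingHom ℚ)).Gal, ∃ m : ℕ, m < 4 ∧ τ = σ ^ m := by
    intro τ
    obtain ⟨n, hn⟩ := hgen τ
    refine ⟨(n % 4).toNat, ?_, ?_⟩
    · have h1 : n % 4 < 4 := Int.emod_lt_of_pos n (by norm_num)
      have h2 : 0 ≤ n % 4 := Int.emod_nonneg n (by norm_num)
      omega
    · have h2 : 0 ≤ n % 4 := Int.emod_nonneg n (by norm_num)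
      have hz4 : σ ^ (4 : ℤ) = 1 := by
        rw [show (4 : ℤ) = ((4 : ℕ) : ℤ) by norm_num, zpow_natCast, hσ4]
      calc τ = σ ^ n := hn.symm
        _ = σ ^ (n % 4 + 4 * (n / 4)) := by rw [Int.emod_add_mul_ediv n 4]
        _ = σ ^ (n % 4) * (σ ^ (4 : ℤ)) ^ (n / 4) := by rw [zpow_add, zpow_mul]
        _ = σ ^ (n % 4) := by rw [hz4, one_zpow, mul_one]
        _ = σ ^ (n % 4).toNat := by rw [← zpow_natCast, Int.toNat_of_nonneg h2]
  -- images of r1 + r3 and distinctness of powers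
  have i0 : (1 : (P.map (Int.castRingHom ℚ)).Gal) (r1 + r3) = r1 + r3 := rfl
  have i1 : σ (r1 + r3) = r3 + r2 := by rw [map_add, h13, h32]
  have i2 : (σ ^ 2) (r1 + r3) = r2 + r4 := by
    rw [hsq, map_add, h13, h32, map_add, h32, h24]
  have i3 : (σ ^ 3) (r1 + r3) = r4 + r1 := by
    rw [hcube, map_add, h13, h32, map_add, h32, h24, map_add, h24, h41]
  haveI : CharZero (P.map (Int.castRingHom ℚ)).SplittingField :=
    charZero_of_injective_algebraMap
      (algebraMap ℚ (P.map (Int.castRingHom ℚ)).SplittingField).injective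
  -- Part 1: fixing subgroup of ℚ(r1 + r3) is trivial
  have hfix : IntermediateField.fixingSubgroup (IntermediateField.adjoin ℚ {r1 + r3})
      = ⊥ := by
    rw [eq_bot_iff]
    intro τ hτ
    rw [Subgroup.mem_bot]
    have hτs : τ (r1 + r3) = r1 + r3 := by
      have hmem : r1 + r3 ∈ (IntermediateField.adjoin ℚ {r1 + r3} : IntermediateField ℚ (P.map (Int.castRingHom ℚ)).SplittingField) :=
        IntermediateField.mem_adjoin_simple_self ℚ (r1 + r3)
      exact (mem_fixingSubgroup_iff (P.map (Int.castRingHom ℚ)).Gal).mp hτ (r1 + r3) hmem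
    obtain ⟨m, hm, rfl⟩ := hform τ
    interval_cases m
    · rw [pow_zero]
      rfl
    · exfalso
      rw [pow_one] at hτs
      erw [i1] at hτs
      apply h12
      linear_combination -hτs
    · exfalso
      erw [i2] at hτs
      have hτs2 : σ (r2 + r4) = σ (r1 + r3) := by rw [hτs]
      rw [map_add, h24, h41, i1] at hτs2
      apply h34
      linear_combination -(hτs + hτs2) / 2
    · exfalso
      erw [i3] at hτs
      apply h34
      linear_combination -hτs
  haveI : IsGalois ℚ (P.map (Int.castRingHom ℚ)).SplittingField :=
    @IsGalois.of_separable_splitting_field _ _ _ _ _ _ (Polynomial.IsSplittingField.splittingField _) hsep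
  have hpart1 : IntermediateField.adjoin ℚ {r1 + r3} = ⊤ := by
    have h := IsGalois.fixedField_fixingSubgroup (IntermediateField.adjoin ℚ {r1 + r3})
    rw [hfix, myFixedField_bot] at h
    exact h.symm
  refine ⟨hpart1, ?_⟩
  -- Part 2
  intro a1 a2 a3
  have hcard : Fintype.card (P.map (Int.castRingHom ℚ)).Gal = 4 := by
    rw [← Nat.card_eq_fintype_card, ← orderOf_eq_card_of_forall_mem_zpowers hgen, horder]
  -- distinctness of 1, σ, σ², σ³
  have e0 : (1 : (P.map (Int.castRingHom ℚ)).Gal) r1 = r1 := rfl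
  have e1 : σ r1 = r3 := h13
  have e2 : (σ ^ 2) r1 = r2 := by rw [hsq, h13, h32]
  have e3 : (σ ^ 3) r1 = r4 := by rw [hcube, h13, h32, h24]
  have d01 : (1 : (P.map (Int.castRingHom ℚ)).Gal) ≠ σ := fun h => h13' (by rw [← e0, h, e1])
  have d02 : (1 : (P.map (Int.castRingHom ℚ)).Gal) ≠ σ ^ 2 := fun h => h12 (by rw [← e0, h, e2])
  have d03 : (1 : (P.map (Int.castRingHom ℚ)).Gal) ≠ σ ^ 3 := fun h => h14 (by rw [← e0, h, e3])
  have d12 : σ ≠ σ ^ 2 := fun h => h23 (by rw [← e1, h, e2])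
  have d13 : σ ≠ σ ^ 3 := fun h => h34 (by rw [← e1, h, e3])
  have d23 : σ ^ 2 ≠ σ ^ 3 := fun h => h24' (by rw [← e2, h, e3])
  have huniv : (Finset.univ : Finset (P.map (Int.castRingHom ℚ)).Gal) = {1, σ, σ ^ 2, σ ^ 3} := by
    symm
    apply Finset.eq_univ_of_card
    rw [hcard]
    rw [Finset.card_insert_of_notMem (by simp [d01, d02, d03]),
      Finset.card_insert_of_notMem (by simp [d12, d13]),
      Finset.card_insert_of_notMem (by simp [d23]),
      Finset.card_singleton]
  rw [Algebra.norm_eq_prod_automorphisms]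
  change _ = algebraMap _ _ (∏ τ : (P.map (Int.castRingHom ℚ)).Gal, τ _)
  rw [huniv]
  rw [Finset.prod_insert (by simp [d01, d02, d03]),
    Finset.prod_insert (by simp [d12, d13]),
    Finset.prod_insert (by simp [d23]),
    Finset.prod_singleton]
  set A := algebraMap ℚ (P.map (Int.castRingHom ℚ)).SplittingField a1 with hA
  set B := algebraMap ℚ (P.map (Int.castRingHom ℚ)).SplittingField a2 with hB
  set C := algebraMap ℚ (P.map (Int.castRingHom ℚ)).SplittingField a3 with hC
  have hcomm : ∀ q : ℚ, σ (algebraMap ℚ (P.map (Int.castRingHom ℚ)).SplittingField q)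
      = algebraMap ℚ (P.map (Int.castRingHom ℚ)).SplittingField q := fun q =>
    AlgEquiv.commutes σ q
  have j0 : (1 : (P.map (Int.castRingHom ℚ)).Gal) (A + B * (r1 + r3) + C * (r1 ^ 2 + r1 * r3 + r3 ^ 2))
      = A + B * (r1 + r3) + C * (r1 ^ 2 + r1 * r3 + r3 ^ 2) := rfl
  have j1 : σ (A + B * (r1 + r3) + C * (r1 ^ 2 + r1 * r3 + r3 ^ 2))
      = A + B * (r2 + r3) + C * (r2 ^ 2 + r2 * r3 + r3 ^ 2) := by
    simp only [map_add, map_mul, map_pow, hA, hB, hC, hcomm, h13, h32]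
    ring
  have j2 : (σ ^ 2) (A + B * (r1 + r3) + C * (r1 ^ 2 + r1 * r3 + r3 ^ 2))
      = A + B * (r2 + r4) + C * (r2 ^ 2 + r2 * r4 + r4 ^ 2) := by
    rw [hsq, j1]
    simp only [map_add, map_mul, map_pow, hA, hB, hC, hcomm, h32, h24]
    ring
  have j3 : (σ ^ 3) (A + B * (r1 + r3) + C * (r1 ^ 2 + r1 * r3 + r3 ^ 2))
      = A + B * (r1 + r4) + C * (r1 ^ 2 + r1 * r4 + r4 ^ 2) := by
    have : (σ ^ 3) (A + B * (r1 + r3) + C * (r1 ^ 2 + r1 * r3 + r3 ^ 2))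
        = σ ((σ ^ 2) (A + B * (r1 + r3) + C * (r1 ^ 2 + r1 * r3 + r3 ^ 2))) := by
      rw [hsq, hcube]
    rw [this, j2]
    simp only [map_add, map_mul, map_pow, hA, hB, hC, hcomm, h24, h41]
    ring
  rw [j0, j1, j2, j3]
  rw [Algebra.algebraMap_self, RingHom.id_apply]
  ring
end

section
/- Let K be a quartic number field with ℚ-basis ν1, ν2, ν3, ν4 ∈ O_K where ν1 = 1 and K = ℚ(ν2). For a prime p and an integer k ≥ 3, the number of triples (x1, x2, x3) ∈ [1, p^k]^3 with p^k dividing N_{K/ℚ}(x1 ν1 + x2 ν2 + x3 ν3) is O(k · p^{11k/4}), where the implied constant depends only on K and the basis. -/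
open NumberField Polynomial Finset


-- Lagrange leading coefficient identity
lemma lagrange_coeff_four (f : ℚ[X]) (hf : f.degree < 5) (a : Fin 5 → ℚ)
    (ha : Function.Injective a) :
    f.coeff 4 = ∑ i : Fin 5, f.eval (a i) *
      (∏ j ∈ Finset.univ.erase i, (a i - a j))⁻¹ := by
  have hinj : Set.InjOn a ↑(Finset.univ : Finset (Fin 5)) := ha.injOn
  have hgen := Lagrange.eq_interpolate (s := (Finset.univ : Finset (Fin 5))) (v := a) hinj
    (by simpa using hf)
  conv_lhs => rw [hgen]
  rw [Lagrange.interpolate_apply, Polynomial.finset_sum_coeff]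
  refine Finset.sum_congr rfl fun i _ => ?_
  rw [Polynomial.coeff_C_mul]
  congr 1
  have hdeg : (Lagrange.basis Finset.univ a i).natDegree = 4 := by
    simpa using Lagrange.natDegree_basis hinj (Finset.mem_univ i)
  have hcoeff : (Lagrange.basis Finset.univ a i).coeff 4
      = (Lagrange.basis Finset.univ a i).leadingCoeff := by
    rw [Polynomial.leadingCoeff, hdeg]
  rw [hcoeff, Lagrange.basis, Polynomial.leadingCoeff_prod, ← Finset.prod_inv_distrib]
  refine Finset.prod_congr rfl fun j hj => ?_
  have hne : a i ≠ a j := fun h => (Finset.mem_erase.mp hj).1 (ha h).symm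
  rw [Lagrange.basisDivisor, Polynomial.leadingCoeff_mul, Polynomial.leadingCoeff_C,
    (Polynomial.monic_X_sub_C (a j)).leadingCoeff, mul_one]


lemma exists_ord_decomp (p : ℕ) (hp : p.Prime) (z : ℤ) (hz : z ≠ 0) :
    ∃ u : ℤ, z = (p : ℤ) ^ (z.natAbs.factorization p) * u ∧ ¬ (p : ℤ) ∣ u := by
  set n := z.natAbs with hn
  have hn0 : n ≠ 0 := Int.natAbs_ne_zero.mpr hz
  set e := n.factorization p with he
  have h1 : ((p : ℤ)) ^ e * ((n / p ^ e : ℕ) : ℤ) = (n : ℤ) := by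
    exact_mod_cast congrArg (Nat.cast : ℕ → ℤ) (Nat.ordProj_mul_ordCompl_eq_self n p)
  have h2 : ¬ p ∣ (n / p ^ e) := Nat.not_dvd_ordCompl hp hn0
  rcases Int.natAbs_eq z with h | h
  · exact ⟨(n / p ^ e : ℕ), by rw [h, ← h1], fun hd => h2 (by exact_mod_cast hd)⟩
  · refine ⟨-(n / p ^ e : ℕ), by rw [h, ← h1]; ring, fun hd => ?_⟩
    rw [dvd_neg] at hd
    exact h2 (by exact_mod_cast hd)

lemma factorization_le_of_not_dvd (p : ℕ) (hp : p.Prime) (m : ℕ) (z : ℤ) (hz : z ≠ 0)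
    (h : ¬ (p : ℤ) ^ m ∣ z) : z.natAbs.factorization p ≤ m - 1 := by
  by_contra hc
  push_neg at hc
  have hm : m ≤ z.natAbs.factorization p := by omega
  have h1 : p ^ m ∣ z.natAbs :=
    dvd_trans (pow_dvd_pow p hm) (Nat.ordProj_dvd z.natAbs p)
  have h2 : ((p ^ m : ℕ) : ℤ) ∣ z := Int.natCast_dvd_natCast.mpr h1 |>.trans
    (Int.natAbs_dvd.mpr dvd_rfl)
  exact h (by exact_mod_cast h2)

lemma cluster_lemma (p k m : ℕ) (hp : p.Prime) (hkm : 4 * (m - 1) < k)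
    (g : Polynomial ℤ) (hmonic : g.Monic) (hdeg : g.natDegree = 4)
    (a : Fin 5 → ℤ) (hdvd : ∀ i, (p : ℤ) ^ k ∣ g.eval (a i))
    (hsep : ∀ i j, i ≠ j → ¬ (p : ℤ) ^ m ∣ (a i - a j)) : False := by
  classical
  have hainj : Function.Injective a := by
    intro i j hij
    by_contra hne
    exact hsep i j hne (by rw [hij, sub_self]; exact dvd_zero _)
  -- the rational polynomial
  set gQ : ℚ[X] := g.map (Int.castRingHom ℚ) with hgQ
  have hgQdeg : gQ.degree < 5 := by
    have h1 : gQ.degree ≤ g.degree := Polynomial.degree_map_le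
    have h2 : g.degree = (4 : ℕ) := by
      rw [Polynomial.degree_eq_natDegree hmonic.ne_zero, hdeg]
    calc gQ.degree ≤ (4 : ℕ) := h2 ▸ h1
      _ < (5 : ℕ) := by exact_mod_cast Nat.lt_succ_self 4
  have hgQcoeff : gQ.coeff 4 = 1 := by
    rw [hgQ, Polynomial.coeff_map, ← hdeg, ← Polynomial.leadingCoeff, hmonic.leadingCoeff]
    simp
  -- injective rational nodes
  have haQ : Function.Injective (fun i => ((a i : ℚ))) := by
    intro i j h
    have h' : ((a i : ℚ)) = ((a j : ℚ)) := h
    exact hainj (by exact_mod_cast h')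
  have hkey := lagrange_coeff_four gQ hgQdeg (fun i => (a i : ℚ)) haQ
  rw [hgQcoeff] at hkey
  have heval : ∀ i : Fin 5, gQ.eval ((a i : ℚ)) = ((g.eval (a i) : ℤ) : ℚ) := by
    intro i
    have h := Polynomial.eval_intCast_map (Int.castRingHom ℚ) g (a i)
    simp only [Int.cast_id, eq_intCast] at h
    rw [hgQ]
    exact h
  -- integer denominators
  set d : Fin 5 → ℤ := fun i => ∏ j ∈ Finset.univ.erase i, (a i - a j) with hd
  have hdne : ∀ i, d i ≠ 0 := by
    intro i
    refine Finset.prod_ne_zero_iff.mpr fun j hj => sub_ne_zero_of_ne ?_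
    exact fun h => (Finset.mem_erase.mp hj).1 (hainj h).symm
  have hdcast : ∀ i, ((d i : ℚ)) = ∏ j ∈ Finset.univ.erase i, ((a i : ℚ) - (a j : ℚ)) := by
    intro i; rw [hd]; push_cast; rfl
  -- valuations of d i
  set e : Fin 5 → ℕ := fun i => (d i).natAbs.factorization p with he
  have heB : ∀ i, e i ≤ 4 * (m - 1) := by
    intro i
    have hfac : (d i).natAbs = ∏ j ∈ Finset.univ.erase i, (a i - a j).natAbs := by
      rw [hd]; exact map_prod Int.natAbsHom _ _
    have : (d i).natAbs.factorization p
        = ∑ j ∈ Finset.univ.erase i, (a i - a j).natAbs.factorization p := by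
      rw [hfac, Nat.factorization_prod (fun j hj => Int.natAbs_ne_zero.mpr
        (sub_ne_zero_of_ne (fun h => (Finset.mem_erase.mp hj).1 (hainj h).symm)))]
      exact Finsupp.finset_sum_apply _ _ _
    rw [he]
    simp only [this]
    calc ∑ j ∈ Finset.univ.erase i, (a i - a j).natAbs.factorization p
        ≤ ∑ j ∈ Finset.univ.erase i, (m - 1) := by
          refine Finset.sum_le_sum fun j hj => ?_
          exact factorization_le_of_not_dvd p hp m _
            (sub_ne_zero_of_ne (fun h => (Finset.mem_erase.mp hj).1 (hainj h).symm))
            (hsep i j (fun h => (Finset.mem_erase.mp hj).1 h.symm))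
      _ = 4 * (m - 1) := by
          rw [Finset.sum_const, Finset.card_erase_of_mem (Finset.mem_univ i)]
          simp [mul_comm]
  -- decompositions
  choose u hu hpu using fun i => exists_ord_decomp p hp (d i) (hdne i)
  set E : ℕ := 4 * (m - 1) with hE
  set L : ℤ := (p : ℤ) ^ E * ∏ j, u j with hL
  set c : Fin 5 → ℤ := fun i => (p : ℤ) ^ (E - e i) * ∏ j ∈ Finset.univ.erase i, u j with hc
  have hdc : ∀ i, d i * c i = L := by
    intro i
    rw [hc, hL, hu i]
    rw [show (p:ℤ)^(e i) * u i * ((p:ℤ)^(E - e i) * ∏ j ∈ Finset.univ.erase i, u j)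
        = ((p:ℤ)^(e i) * (p:ℤ)^(E - e i)) * (u i * ∏ j ∈ Finset.univ.erase i, u j) by ring,
      ← pow_add, Nat.add_sub_cancel' (heB i),
      Finset.mul_prod_erase _ _ (Finset.mem_univ i)]
  -- the integer identity
  have hQ : (L : ℚ) = ∑ i : Fin 5, ((g.eval (a i) : ℤ) : ℚ) * (c i : ℚ) := by
    have : (1 : ℚ) = ∑ i : Fin 5, ((g.eval (a i) : ℤ) : ℚ) * ((d i : ℚ))⁻¹ := by
      rw [hkey]
      refine Finset.sum_congr rfl fun i _ => ?_
      rw [heval i, hdcast i]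
    calc (L : ℚ) = (∑ i : Fin 5, ((g.eval (a i) : ℤ) : ℚ) * ((d i : ℚ))⁻¹) * (L : ℚ) := by
          rw [← this, one_mul]
      _ = ∑ i : Fin 5, ((g.eval (a i) : ℤ) : ℚ) * (c i : ℚ) := by
          rw [Finset.sum_mul]
          refine Finset.sum_congr rfl fun i _ => ?_
          have hdiq : ((d i : ℚ)) ≠ 0 := Int.cast_ne_zero.mpr (hdne i)
          have hLi : ((d i : ℚ)) * (c i : ℚ) = (L : ℚ) := by exact_mod_cast hdc i
          rw [mul_assoc, ← hLi, inv_mul_cancel_left₀ hdiq]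
  have hZ : L = ∑ i : Fin 5, g.eval (a i) * c i := by
    have := hQ
    push_cast at this
    exact_mod_cast this
  -- p^k divides L
  have hpkL : (p : ℤ) ^ k ∣ L := hZ ▸ Finset.dvd_sum fun i _ => (hdvd i).mul_right _
  -- but p^(E+1) ∤ L
  have hpU : ¬ (p : ℤ) ∣ ∏ j, u j := by
    intro hdvdU
    obtain ⟨j, _, hj⟩ := (Nat.prime_iff_prime_int.mp hp).dvd_finset_prod_iff _ |>.mp hdvdU
    exact hpu j hj
  have hE1k : E + 1 ≤ k := by omega
  have : (p : ℤ) ^ E * (p : ℤ) ∣ (p : ℤ) ^ E * ∏ j, u j := by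
    calc (p : ℤ) ^ E * (p : ℤ) = (p : ℤ) ^ (E + 1) := by rw [pow_succ]
      _ ∣ (p : ℤ) ^ k := pow_dvd_pow _ hE1k
      _ ∣ L := hpkL
  exact hpU ((mul_dvd_mul_iff_left (pow_ne_zero E (by exact_mod_cast hp.ne_zero))).mp this)

lemma root_count (p k m : ℕ) (hp : p.Prime) (hm1 : 1 ≤ m) (hmk : m ≤ k)
    (hkm : 4 * (m - 1) < k) (g : Polynomial ℤ) (hmonic : g.Monic) (hdeg : g.natDegree = 4) :
    ((Finset.Icc (1 : ℤ) ((p : ℤ) ^ k)).filter (fun x => (p : ℤ) ^ k ∣ g.eval x)).card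
      ≤ 4 * (p ^ (k - m) + 1) := by
  classical
  set s := (Finset.Icc (1 : ℤ) ((p : ℤ) ^ k)).filter (fun x => (p : ℤ) ^ k ∣ g.eval x) with hs
  set f : ℤ → ZMod (p ^ m) := fun x => (x : ZMod (p ^ m)) with hf
  -- step 1: at most 4 residue classes
  have himg : (s.image f).card ≤ 4 := by
    by_contra hc
    push_neg at hc
    obtain ⟨t, hts, htc⟩ := Finset.exists_subset_card_eq (show 5 ≤ (s.image f).card from hc)
    have hsec : ∀ y ∈ t, ∃ x, x ∈ s ∧ f x = y := by
      intro y hy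
      obtain ⟨x, hx, hfx⟩ := Finset.mem_image.mp (hts hy)
      exact ⟨x, hx, hfx⟩
    choose sec hsec1 hsec2 using hsec
    have et := t.equivFinOfCardEq htc
    set a : Fin 5 → ℤ := fun i => sec (et.symm i).1 (et.symm i).2 with ha
    refine cluster_lemma p k m hp hkm g hmonic hdeg a
      (fun i => (Finset.mem_filter.mp (hsec1 _ _)).2) ?_
    intro i j hij hdvdm
    have hfij : f (a i) = f (a j) := by
      rw [hf]
      have : ((a i : ZMod (p ^ m))) = ((a j : ZMod (p ^ m))) := by
        rw [ZMod.intCast_eq_intCast_iff]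
        have hd2 : ((p ^ m : ℕ) : ℤ) ∣ a i - a j := by push_cast; exact hdvdm
        exact Int.ModEq.symm (Int.modEq_iff_dvd.mpr hd2)
      exact this
    have : (et.symm i).1 = (et.symm j).1 := by
      rw [ha] at hfij
      rw [← hsec2 _ (et.symm i).2, ← hsec2 _ (et.symm j).2]
      exact hfij
    exact hij (by
      have := Subtype.ext this
      have h2 := congrArg et this
      simpa using h2)
  -- step 2: each fiber has at most p^(k-m)+1 elements
  have hfiber : ∀ b ∈ s.image f, (s.filter (fun x => f x = b)).card ≤ p ^ (k - m) + 1 := by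
    intro b _
    have hinj : Set.InjOn (fun x => x / (p : ℤ) ^ m) ↑(s.filter (fun x => f x = b)) := by
      intro x hx y hy hxy
      simp only [Finset.coe_filter, Set.mem_setOf_eq, hs, Finset.mem_filter] at hx hy
      have hmod : x % (p : ℤ) ^ m = y % (p : ℤ) ^ m := by
        have : ((x : ZMod (p ^ m))) = ((y : ZMod (p ^ m))) := hx.2.trans hy.2.symm
        rw [ZMod.intCast_eq_intCast_iff'] at this
        push_cast at this
        exact this
      have hq : x / (p : ℤ) ^ m = y / (p : ℤ) ^ m := hxy
      calc x = (p : ℤ) ^ m * (x / (p : ℤ) ^ m) + x % (p : ℤ) ^ m :=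
            (Int.mul_ediv_add_emod x _).symm
        _ = (p : ℤ) ^ m * (y / (p : ℤ) ^ m) + y % (p : ℤ) ^ m := by rw [hq, hmod]
        _ = y := Int.mul_ediv_add_emod y _
    have hmaps : ∀ x ∈ s.filter (fun x => f x = b),
        x / (p : ℤ) ^ m ∈ Finset.Icc (0 : ℤ) ((p : ℤ) ^ (k - m)) := by
      intro x hx
      simp only [hs, Finset.mem_filter, Finset.mem_Icc] at hx
      obtain ⟨⟨⟨h1, h2⟩, _⟩, _⟩ := hx
      have hppos : (0 : ℤ) < (p : ℤ) ^ m := pow_pos (by exact_mod_cast hp.pos) m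
      refine Finset.mem_Icc.mpr ⟨Int.ediv_nonneg (by omega) hppos.le, ?_⟩
      have hsplit : (p : ℤ) ^ k = (p : ℤ) ^ (k - m) * (p : ℤ) ^ m := by
        rw [← pow_add]; congr 1; omega
      have hcalc : (p : ℤ) ^ k / (p : ℤ) ^ m = (p : ℤ) ^ (k - m) := by
        rw [hsplit]; exact Int.mul_ediv_cancel _ hppos.ne'
      calc x / (p : ℤ) ^ m ≤ (p : ℤ) ^ k / (p : ℤ) ^ m :=
            Int.ediv_le_ediv hppos h2
        _ = (p : ℤ) ^ (k - m) := hcalc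
    calc (s.filter (fun x => f x = b)).card
        ≤ (Finset.Icc (0 : ℤ) ((p : ℤ) ^ (k - m))).card :=
          Finset.card_le_card_of_injOn _ hmaps hinj
      _ = p ^ (k - m) + 1 := by
          rw [Int.card_Icc]
          have : ((p : ℤ) ^ (k - m) + 1 - 0) = ((p ^ (k - m) + 1 : ℕ) : ℤ) := by push_cast; ring
          rw [this, Int.toNat_natCast]
  calc s.card ≤ (p ^ (k - m) + 1) * (s.image f).card :=
        Finset.card_le_mul_card_image s _ hfiber
    _ ≤ (p ^ (k - m) + 1) * 4 := Nat.mul_le_mul_left _ himg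
    _ = 4 * (p ^ (k - m) + 1) := by ring

lemma charpoly_eval {n : Type*} [Fintype n] [DecidableEq n] {R : Type*} [CommRing R]
    (M : Matrix n n R) (x : R) :
    M.charpoly.eval x = (Matrix.scalar n x - M).det := by
  rw [Matrix.charpoly, show (Polynomial.eval x : R[X] → R) = ⇑(Polynomial.evalRingHom x)
    from rfl, RingHom.map_det]
  congr 1
  ext i j
  by_cases h : i = j <;>
    simp [Matrix.charmatrix_apply, Matrix.map_apply, Matrix.scalar_apply,
      Matrix.diagonal_apply, Matrix.sub_apply, h]

section NormPoly

variable (K : Type*) [Field K] [NumberField K]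

noncomputable def normPoly (α : 𝓞 K) : Polynomial ℤ :=
  (Algebra.leftMulMatrix (NumberField.RingOfIntegers.basis K) (-α)).charpoly

lemma normPoly_monic (α : 𝓞 K) : (normPoly K α).Monic := Matrix.charpoly_monic _

lemma normPoly_natDegree (h4 : Module.finrank ℚ K = 4) (α : 𝓞 K) :
    (normPoly K α).natDegree = 4 := by
  rw [normPoly, Matrix.charpoly_natDegree_eq_dim,
    ← Module.finrank_eq_card_chooseBasisIndex, NumberField.RingOfIntegers.rank, h4]

lemma normPoly_eval (α : 𝓞 K) (x : ℤ) :
    (normPoly K α).eval x = Algebra.norm ℤ ((x : 𝓞 K) + α) := by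
  rw [normPoly, charpoly_eval,
    Algebra.norm_eq_matrix_det (NumberField.RingOfIntegers.basis K)]
  congr 1
  have h1 : Algebra.leftMulMatrix (NumberField.RingOfIntegers.basis K) ((x : 𝓞 K) + α)
      = Algebra.leftMulMatrix (NumberField.RingOfIntegers.basis K) ((x : 𝓞 K))
        + Algebra.leftMulMatrix (NumberField.RingOfIntegers.basis K) α := by
    rw [map_add]
  rw [h1]
  have h2 : Algebra.leftMulMatrix (NumberField.RingOfIntegers.basis K) ((x : 𝓞 K))
      = Matrix.scalar _ x := by
    have : ((x : 𝓞 K)) = algebraMap ℤ (𝓞 K) x := by simp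
    rw [this, AlgHom.commutes]
    rfl
  rw [h2, map_neg, sub_neg_eq_add]

end NormPoly


/-- Let `K` be a quartic number field with `ℚ`-basis
`ν1, ν2, ν3, ν4 ∈ 𝓞 K`, `ν1 = 1` and `K = ℚ(ν2)`. Then for every prime `p` and every
`k ≥ 3`, the number of triples `(x1,x2,x3) ∈ [1,p^k]^3` with
`p^k ∣ N_{K/ℚ}(x1 ν1 + x2 ν2 + x3 ν3)` is `O(k ⬝ p^{11k/4})`, with implied constant
depending only on `K` and the basis. -/
theorem norm_form_high_prime_power_divisibility_count (K : Type*) [Field K] [NumberField K]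
    (h4 : Module.finrank ℚ K = 4)
    (ν : Fin 4 → 𝓞 K) (bν : Module.Basis (Fin 4) ℚ K) (hbν : ∀ i, bν i = (ν i : K))
    (hν1 : ν 0 = 1)
    (hgen : IntermediateField.adjoin ℚ {(ν 1 : K)} = ⊤) :
    ∃ C : ℝ, 0 < C ∧ ∀ (p k : ℕ), p.Prime → 3 ≤ k →
      (Set.ncard {x : ℤ × ℤ × ℤ |
          (1 ≤ x.1 ∧ x.1 ≤ (p : ℤ) ^ k) ∧ (1 ≤ x.2.1 ∧ x.2.1 ≤ (p : ℤ) ^ k) ∧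
          (1 ≤ x.2.2 ∧ x.2.2 ≤ (p : ℤ) ^ k) ∧
          (p : ℤ) ^ k ∣ Algebra.norm ℤ (x.1 • ν 0 + x.2.1 • ν 1 + x.2.2 • ν 2)} : ℝ)
        ≤ C * k * (p : ℝ) ^ ((11 * (k : ℝ)) / 4) := by
  classical
  refine ⟨8, by norm_num, fun p k hp hk => ?_⟩
  set m : ℕ := (k + 3) / 4 with hm
  have hm1 : 1 ≤ m := by omega
  have hmk : m ≤ k := by omega
  have hkm : 4 * (m - 1) < k := by omega
  set P : ℤ := (p : ℤ) ^ k with hP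
  set T : Finset (ℤ × ℤ × ℤ) :=
    ((Finset.Icc (1 : ℤ) P) ×ˢ (Finset.Icc (1 : ℤ) P) ×ˢ (Finset.Icc (1 : ℤ) P)).filter
      (fun x => P ∣ Algebra.norm ℤ (x.1 • ν 0 + x.2.1 • ν 1 + x.2.2 • ν 2)) with hT
  have hset : {x : ℤ × ℤ × ℤ |
      (1 ≤ x.1 ∧ x.1 ≤ (p : ℤ) ^ k) ∧ (1 ≤ x.2.1 ∧ x.2.1 ≤ (p : ℤ) ^ k) ∧
      (1 ≤ x.2.2 ∧ x.2.2 ≤ (p : ℤ) ^ k) ∧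
      (p : ℤ) ^ k ∣ Algebra.norm ℤ (x.1 • ν 0 + x.2.1 • ν 1 + x.2.2 • ν 2)} = ↑T := by
    ext x
    simp only [hT, Set.mem_setOf_eq, Finset.coe_filter, Finset.mem_product, Finset.mem_Icc]
    tauto
  rw [hset, Set.ncard_coe_finset]
  -- main cardinality bound
  have hcard : T.card ≤ (4 * (p ^ (k - m) + 1)) *
      ((Finset.Icc (1 : ℤ) P) ×ˢ (Finset.Icc (1 : ℤ) P)).card := by
    refine Finset.card_le_mul_card_image_of_maps_to
      (f := fun x : ℤ × ℤ × ℤ => (x.2.1, x.2.2)) ?_ _ ?_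
    · intro x hx
      simp only [hT, Finset.mem_filter, Finset.mem_product] at hx
      exact Finset.mem_product.mpr ⟨hx.1.2.1, hx.1.2.2⟩
    · intro b _
      set g : Polynomial ℤ := normPoly K (b.1 • ν 1 + b.2 • ν 2) with hg
      calc (T.filter (fun x => (x.2.1, x.2.2) = b)).card
          ≤ ((Finset.Icc (1 : ℤ) P).filter (fun x1 => (p : ℤ) ^ k ∣ g.eval x1)).card := by
            refine Finset.card_le_card_of_injOn (fun x => x.1) ?_ ?_
            · intro x hx
              simp only [hT, Finset.mem_coe, Finset.mem_filter, Finset.mem_product] at hx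
              obtain ⟨⟨⟨hx1, _, _⟩, hdvd⟩, hb⟩ := hx
              refine Finset.mem_filter.mpr ⟨hx1, ?_⟩
              have hb1 : x.2.1 = b.1 := by rw [← hb]
              have hb2 : x.2.2 = b.2 := by rw [← hb]
              have heval : g.eval x.1
                  = Algebra.norm ℤ (x.1 • ν 0 + x.2.1 • ν 1 + x.2.2 • ν 2) := by
                rw [hg, normPoly_eval, hb1, hb2]
                congr 1
                rw [hν1]
                push_cast
                rw [zsmul_one]
                ring
              rw [heval]
              exact hdvd
            · intro x hx y hy hxy
              simp only [Finset.mem_coe, Finset.mem_filter] at hx hy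
              have h1 : x.1 = y.1 := hxy
              have h2' : (x.2.1, x.2.2) = (y.2.1, y.2.2) := hx.2.trans hy.2.symm
              exact Prod.ext h1
                (Prod.ext (congrArg Prod.fst h2') (congrArg Prod.snd h2'))
        _ ≤ 4 * (p ^ (k - m) + 1) := by
            exact root_count p k m hp hm1 hmk hkm g (normPoly_monic K _)
              (normPoly_natDegree K h4 _)
  have hPcard : ((Finset.Icc (1 : ℤ) P) ×ˢ (Finset.Icc (1 : ℤ) P)).card = p ^ k * p ^ k := by
    rw [Finset.card_product, Int.card_Icc]
    have : P + 1 - 1 = ((p ^ k : ℕ) : ℤ) := by rw [hP]; push_cast; ring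
    rw [this, Int.toNat_natCast]
  rw [hPcard] at hcard
  -- to the reals
  have hppow1 : 1 ≤ p ^ (k - m) := Nat.one_le_pow _ _ hp.pos
  have hnat : T.card ≤ 8 * p ^ ((k - m) + (k + k)) := by
    calc T.card ≤ (4 * (p ^ (k - m) + 1)) * (p ^ k * p ^ k) := hcard
      _ ≤ (8 * p ^ (k - m)) * (p ^ k * p ^ k) := by
          have : 4 * (p ^ (k - m) + 1) ≤ 8 * p ^ (k - m) := by omega
          exact Nat.mul_le_mul_right _ this
      _ = 8 * p ^ ((k - m) + (k + k)) := by rw [pow_add, pow_add]; ring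
  have hexp : (((k - m) + (k + k) : ℕ) : ℝ) ≤ (11 * (k : ℝ)) / 4 := by
    rw [le_div_iff₀ (by norm_num : (0 : ℝ) < 4)]
    have h4n : (((k - m) + (k + k)) * 4 : ℕ) ≤ 11 * k := by omega
    calc (((k - m) + (k + k) : ℕ) : ℝ) * 4 = ((((k - m) + (k + k)) * 4 : ℕ) : ℝ) := by
          push_cast; ring
      _ ≤ ((11 * k : ℕ) : ℝ) := by exact_mod_cast h4n
      _ = 11 * (k : ℝ) := by push_cast; ring
  have hp1R : (1 : ℝ) ≤ (p : ℝ) := by exact_mod_cast hp.one_le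
  have hrpow : ((p : ℝ)) ^ (((k - m) + (k + k) : ℕ) : ℝ) ≤ (p : ℝ) ^ ((11 * (k : ℝ)) / 4) :=
    Real.rpow_le_rpow_of_exponent_le hp1R hexp
  calc (T.card : ℝ) ≤ 8 * (p : ℝ) ^ (((k - m) + (k + k)) : ℕ) := by
        exact_mod_cast hnat
    _ = 8 * (p : ℝ) ^ (((k - m) + (k + k) : ℕ) : ℝ) := by
        rw [Real.rpow_natCast]
    _ ≤ 8 * (p : ℝ) ^ ((11 * (k : ℝ)) / 4) := by
        exact mul_le_mul_of_nonneg_left hrpow (by norm_num)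
    _ ≤ 8 * k * (p : ℝ) ^ ((11 * (k : ℝ)) / 4) := by
        have hk1 : (1 : ℝ) ≤ (k : ℝ) := by exact_mod_cast (by omega : 1 ≤ k)
        have hpos : (0 : ℝ) ≤ (p : ℝ) ^ ((11 * (k : ℝ)) / 4) :=
          Real.rpow_nonneg (by positivity) _
        nlinarith
end

section
/- Let f1, f2 ∈ ℤ[a0] be quadratic polynomials (coefficients depending on parameters), let n be an integer with Res(f1, f2) = n·s for integers n, s, and suppose p is a prime with p | n, p ∤ s, and n squarefree in the sense that p^2 ∤ n·s. If f1 and f2 have a common root in an extension of 𝔽_p and the reduction of f2 mod p has degree 2, then f1 and f2 have a common root in 𝔽_p itself. -/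
open Polynomial

/-- The resultant of two quadratic polynomials, as the determinant of the 4×4 Sylvester
matrix. -/
noncomputable def res22 (f g : Polynomial ℤ) : ℤ :=
  Matrix.det !![f.coeff 2, f.coeff 1, f.coeff 0, 0;
                0, f.coeff 2, f.coeff 1, f.coeff 0;
                g.coeff 2, g.coeff 1, g.coeff 0, 0;
                0, g.coeff 2, g.coeff 1, g.coeff 0]

private lemma res22_key (a2 a1 a0 b2 b1 b0 g2 g1 g0 C D q : ℤ)
    (e2 : D*a2 - C*b2 = q*g2) (e1 : D*a1 - C*b1 = q*g1) (e0 : D*a0 - C*b0 = q*g0) :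
    D^2 * Matrix.det !![a2,a1,a0,0;(0:ℤ),a2,a1,a0;b2,b1,b0,0;0,b2,b1,b0]
      = q^2 * Matrix.det !![g2,g1,g0,0;(0:ℤ),g2,g1,g0;b2,b1,b0,0;0,b2,b1,b0] := by
  have key : ∀ x2 x1 x0 : ℤ,
      Matrix.det !![x2,x1,x0,0;(0:ℤ),x2,x1,x0;b2,b1,b0,0;0,b2,b1,b0]
        = x2^2*b0^2 - x2*x1*b1*b0 - 2*x2*x0*b2*b0 + x2*x0*b1^2 + x1^2*b2*b0
          - x1*x0*b2*b1 + x0^2*b2^2 := by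
    intro x2 x1 x0
    simp [Matrix.det_succ_row_zero, Fin.sum_univ_succ, Fin.succAbove,
      Matrix.cons_val_succ]
    ring
  have h1 : q^2 * Matrix.det !![g2,g1,g0,0;(0:ℤ),g2,g1,g0;b2,b1,b0,0;0,b2,b1,b0]
      = Matrix.det !![q*g2,q*g1,q*g0,0;(0:ℤ),q*g2,q*g1,q*g0;b2,b1,b0,0;0,b2,b1,b0] := by
    rw [key, key]; ring
  rw [h1, ← e2, ← e1, ← e0, key, key]; ring

/-- Let `f1, f2 ∈ ℤ[a0]` be quadratics with `Res(f1, f2) = n ⬝ s`, and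
`p` a prime with `p ∣ n`, `p ∤ s` and `p² ∤ n s`.  If `f1` and `f2` have a common root in
an extension of `𝔽_p` (equivalently, in its algebraic closure) and `f2 mod p` has
degree 2, then `f1` and `f2` have a common root in `𝔽_p` itself. -/
theorem common_root_descends_to_Fp (f1 f2 : Polynomial ℤ)
    (h1 : f1.natDegree = 2) (h2 : f2.natDegree = 2)
    (n s : ℤ) (hres : res22 f1 f2 = n * s)
    (p : ℕ) [hp : Fact p.Prime] (hpn : (p : ℤ) ∣ n) (hps : ¬ (p : ℤ) ∣ s)
    (hsq : ¬ ((p : ℤ) ^ 2 ∣ n * s))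
    (hdeg2 : (f2.map (Int.castRingHom (ZMod p))).natDegree = 2)
    (hcommon : ∃ x : AlgebraicClosure (ZMod p),
        Polynomial.eval x ((f1.map (Int.castRingHom (ZMod p))).map
          (algebraMap (ZMod p) (AlgebraicClosure (ZMod p)))) = 0 ∧
        Polynomial.eval x ((f2.map (Int.castRingHom (ZMod p))).map
          (algebraMap (ZMod p) (AlgebraicClosure (ZMod p)))) = 0) :
    ∃ x : ZMod p,
      Polynomial.eval x (f1.map (Int.castRingHom (ZMod p))) = 0 ∧
      Polynomial.eval x (f2.map (Int.castRingHom (ZMod p))) = 0 := by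
  obtain ⟨x, hx1, hx2⟩ := hcommon
  set F1 := f1.map (Int.castRingHom (ZMod p)) with hF1def
  set F2 := f2.map (Int.castRingHom (ZMod p)) with hF2def
  have hF2ne : F2 ≠ 0 := by
    intro h; rw [h] at hdeg2; simp at hdeg2
  -- x is integral over ZMod p
  have hxint : IsIntegral (ZMod p) x := Algebra.IsIntegral.isIntegral x
  set m := minpoly (ZMod p) x with hmdef
  have hmon : m.Monic := minpoly.monic hxint
  have haev1 : aeval x F1 = 0 := by rwa [aeval_def, ← eval_map]
  have haev2 : aeval x F2 = 0 := by rwa [aeval_def, ← eval_map]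
  have hd1 : m ∣ F1 := minpoly.dvd _ _ haev1
  have hd2 : m ∣ F2 := minpoly.dvd _ _ haev2
  have hmle : m.natDegree ≤ 2 := by
    have := Polynomial.natDegree_le_of_dvd hd2 hF2ne
    omega
  have hmpos : 0 < m.natDegree := minpoly.natDegree_pos hxint
  -- case on degree of m
  interval_cases hmd : m.natDegree
  · -- degree 1 : m = X + C (m.coeff 0), common root -(m.coeff 0)
    have hm : m = X + C (m.coeff 0) := hmon.eq_X_add_C hmd
    refine ⟨-(m.coeff 0), ?_, ?_⟩
    · obtain ⟨q, hq⟩ := hd1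
      rw [hq, eval_mul, hm]; simp
    · obtain ⟨q, hq⟩ := hd2
      rw [hq, eval_mul, hm]; simp
  · -- degree 2 : F1 = m * C c, F2 = m * C d
    exfalso
    have hm2 : m.coeff 2 = 1 := by
      have := hmon.coeff_natDegree; rwa [hmd] at this
    obtain ⟨q1, hq1⟩ := hd1
    obtain ⟨q2, hq2⟩ := hd2
    have hF1le : F1.natDegree ≤ 2 := by
      rw [hF1def, ← h1]; exact Polynomial.natDegree_map_le
    -- q1 is a constant
    have hq1c : ∃ c : ZMod p, q1 = C c := by
      rcases eq_or_ne q1 0 with h | h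
      · exact ⟨0, by simp [h]⟩
      · have hne : m ≠ 0 := hmon.ne_zero
        have : F1.natDegree = m.natDegree + q1.natDegree := by
          rw [hq1, Polynomial.natDegree_mul hne h]
        have : q1.natDegree = 0 := by omega
        exact ⟨q1.coeff 0, (Polynomial.eq_C_of_natDegree_eq_zero this)⟩
    have hq2c : ∃ d : ZMod p, q2 = C d := by
      have h : q2 ≠ 0 := by rintro rfl; simp at hq2; exact hF2ne hq2
      have hne : m ≠ 0 := hmon.ne_zero
      have : F2.natDegree = m.natDegree + q2.natDegree := by
        rw [hq2, Polynomial.natDegree_mul hne h]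
      have : q2.natDegree = 0 := by omega
      exact ⟨q2.coeff 0, (Polynomial.eq_C_of_natDegree_eq_zero this)⟩
    obtain ⟨c, rfl⟩ := hq1c
    obtain ⟨d, rfl⟩ := hq2c
    have hdne : d ≠ 0 := by
      rintro rfl; simp at hq2; exact hF2ne hq2
    -- coefficient relation : d * F1.coeff i = c * F2.coeff i
    have hco : ∀ i, d * F1.coeff i - c * F2.coeff i = 0 := by
      intro i
      rw [hq1, hq2, coeff_mul_C, coeff_mul_C]
      ring
    -- lift to ℤ
    set C : ℤ := (c.val : ℤ)
    set D : ℤ := (d.val : ℤ)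
    have hCc : ((C : ℤ) : ZMod p) = c := by simp [C, ZMod.natCast_val, ZMod.cast_id]
    have hDd : ((D : ℤ) : ZMod p) = d := by simp [D, ZMod.natCast_val, ZMod.cast_id]
    have hdvd : ∀ i, (p : ℤ) ∣ D * f1.coeff i - C * f2.coeff i := by
      intro i
      rw [← ZMod.intCast_zmod_eq_zero_iff_dvd]
      push_cast
      rw [hCc, hDd]
      have h1i : F1.coeff i = ((f1.coeff i : ℤ) : ZMod p) := by
        rw [hF1def, coeff_map]; rfl
      have h2i : F2.coeff i = ((f2.coeff i : ℤ) : ZMod p) := by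
        rw [hF2def, coeff_map]; rfl
      rw [← h1i, ← h2i]
      exact hco i
    obtain ⟨g2', e2⟩ := hdvd 2
    obtain ⟨g1', e1⟩ := hdvd 1
    obtain ⟨g0', e0⟩ := hdvd 0
    have hkey := res22_key (f1.coeff 2) (f1.coeff 1) (f1.coeff 0)
      (f2.coeff 2) (f2.coeff 1) (f2.coeff 0) g2' g1' g0' C D (p : ℤ) e2 e1 e0
    have hdiv : (p : ℤ)^2 ∣ D^2 * (n * s) := by
      rw [← hres]
      unfold res22
      exact ⟨_, hkey⟩
    have hpD : ¬ (p : ℤ) ∣ D := by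
      intro h
      rw [← ZMod.intCast_zmod_eq_zero_iff_dvd] at h
      rw [hDd] at h
      exact hdne h
    have hprime : Prime (p : ℤ) := Nat.prime_iff_prime_int.mp hp.out
    have hcop : IsCoprime ((p : ℤ)^2) (D^2) :=
      (((hprime.coprime_iff_not_dvd).mpr hpD).pow)
    exact hsq (hcop.dvd_of_dvd_mul_left hdiv)
end
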